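/- arXiv:1911.05467 — 4 statements merged into one kernel-verified Lean document; each statement's English description precedes it below -/
import Mathlib

section
/- There exists a constant C > 0 such that for every integer d ≥ 1, every nonempty finite downward closed set Λ ⊂ ℕ₀^d, and every real polynomial p in the downward closed polynomial space P_Λ, there exists a σ₂-network Φ with input dimension d, output dimension 1, at most ∑_{i=1}^{d} ⌊log₂ N_i⌋ + d hidden layers (where N_i = max_{α ∈ Λ} α_i, with the convention ⌊log₂ 0⌋ = 0), at most C·|Λ| neurons, and at most C·|Λ| nonzero weights, whose realization satisfies R(Φ)(x) = p(x) for all x ∈ ℝ^d. -/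
open scoped Classical

noncomputable section

/-- Chebyshev polynomials of the first kind, as functions `ℝ → ℝ`:
`T 0 x = 1`, `T 1 x = x`, `T (n+2) x = 2x * T (n+1) x - T n x`. -/
def chebT : ℕ → ℝ → ℝ
  | 0, _ => 1
  | 1, x => x
  | n + 2, x => 2 * x * chebT (n + 1) x - chebT n x

/-- Rectified power unit `σ_s(x) = max(0,x)^s`. -/
def repu (s : ℕ) (x : ℝ) : ℝ := (max 0 x) ^ s

/-- A feed-forward neural network with `L` layers: layer widths `width 0, …, width L`
(`width 0` is the input dimension, `width L` the output dimension), weight matrices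
`A k` and bias vectors `b k` for `k = 1, …, L` (entries outside the relevant ranges
are irrelevant). -/
structure Net where
  L : ℕ
  width : ℕ → ℕ
  A : ℕ → ℕ → ℕ → ℝ
  b : ℕ → ℕ → ℝ

namespace Net

/-- The state `x_k` of the network on input `x` with activation `σ`:
`x_0 = x`, `x_{k+1} = σ(A_{k+1} x_k + b_{k+1})` componentwise. -/
def fwd (σ : ℝ → ℝ) (Φ : Net) (x : ℕ → ℝ) : ℕ → ℕ → ℝ
  | 0 => x
  | k + 1 => fun i =>
      σ ((∑ j ∈ Finset.range (Φ.width k), Φ.A (k + 1) i j * Φ.fwd σ x k j) + Φ.b (k + 1) i)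

/-- The realization `R(Φ)(x) = A_L x_{L-1} + b_L` (no activation on the last layer). -/
def realize (σ : ℝ → ℝ) (Φ : Net) (x : ℕ → ℝ) : ℕ → ℝ := fun i =>
  (∑ j ∈ Finset.range (Φ.width (Φ.L - 1)), Φ.A Φ.L i j * Φ.fwd σ x (Φ.L - 1) j) + Φ.b Φ.L i

/-- Number of hidden layers. -/
def hiddenLayers (Φ : Net) : ℕ := Φ.L - 1

/-- Number of neurons (activation functions): total width of the hidden layers. -/
def neurons (Φ : Net) : ℕ := ∑ k ∈ Finset.Ico 1 Φ.L, Φ.width k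

/-- Number of nonzero weights: nonzero entries of all the `A_k` and `b_k`. -/
def nonzeroWeights (Φ : Net) : ℕ :=
  ∑ k ∈ Finset.Icc 1 Φ.L,
    ((((Finset.range (Φ.width k)) ×ˢ (Finset.range (Φ.width (k - 1)))).filter
        (fun p => Φ.A k p.1 p.2 ≠ 0)).card
      + ((Finset.range (Φ.width k)).filter (fun i => Φ.b k i ≠ 0)).card)

end Net

namespace Stmt8

open Finset

lemma repu_two_add_neg (a : ℝ) : repu 2 a + repu 2 (-a) = a ^ 2 := by
  rcases le_total a 0 with h | h
  · have h1 : max 0 a = 0 := max_eq_left h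
    have h2 : max 0 (-a) = -a := max_eq_right (by linarith)
    simp [repu, h1, h2]
  · have h1 : max 0 a = a := max_eq_right h
    have h2 : max 0 (-a) = 0 := max_eq_left (by linarith)
    simp [repu, h1, h2]

def eps (v : ℕ) : ℝ := if v % 2 = 0 then 1 else -1
def del (v : ℕ) : ℝ := if v % 4 < 2 then 1 else -1
def dw (v : ℕ) : ℝ := (if v % 4 < 2 then 1 else -1) / 4

lemma quarter (c A B : ℝ) :
    c * dw 0 * repu 2 (eps 0 * (A + del 0 * B)) +
    (c * dw 1 * repu 2 (eps 1 * (A + del 1 * B)) +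
    (c * dw 2 * repu 2 (eps 2 * (A + del 2 * B)) +
    c * dw 3 * repu 2 (eps 3 * (A + del 3 * B)))) = c * (A * B) := by
  have e0 : eps 0 = 1 := by norm_num [eps]
  have e1 : eps 1 = -1 := by norm_num [eps]
  have e2 : eps 2 = 1 := by norm_num [eps]
  have e3 : eps 3 = -1 := by norm_num [eps]
  have d0 : del 0 = 1 := by norm_num [del]
  have d1 : del 1 = 1 := by norm_num [del]
  have d2 : del 2 = -1 := by norm_num [del]
  have d3 : del 3 = -1 := by norm_num [del]
  have w0 : dw 0 = 1/4 := by norm_num [dw]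
  have w1 : dw 1 = 1/4 := by norm_num [dw]
  have w2 : dw 2 = -(1/4) := by norm_num [dw]
  have w3 : dw 3 = -(1/4) := by norm_num [dw]
  rw [e0, e1, e2, e3, d0, d1, d2, d3, w0, w1, w2, w3]
  have h1 : repu 2 (1 * (A + 1 * B)) + repu 2 (-1 * (A + 1 * B)) = (A + B) ^ 2 := by
    have := repu_two_add_neg (A + B); rw [← this]; ring_nf
  have h2 : repu 2 (1 * (A + -1 * B)) + repu 2 (-1 * (A + -1 * B)) = (A - B) ^ 2 := by
    have := repu_two_add_neg (A - B); rw [← this]; ring_nf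
  linear_combination (c/4) * h1 - (c/4) * h2

lemma sum_range_four_mul {M : Type*} [AddCommMonoid M] (n : ℕ) (h : ℕ → M) :
    ∑ j ∈ range (4 * n), h j
      = ∑ m ∈ range n, (h (4 * m) + (h (4 * m + 1) + (h (4 * m + 2) + h (4 * m + 3)))) := by
  induction n with
  | zero => simp
  | succ n ih =>
      have : 4 * (n + 1) = (4 * n) + 1 + 1 + 1 + 1 := by ring
      rw [this, sum_range_succ, sum_range_succ, sum_range_succ, sum_range_succ, ih,
        sum_range_succ]
      abel

structure PNet where
  depth : ℕ
  ins : ℕ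
  w : ℕ → ℕ
  F : ℕ → ℕ → ℕ → ℝ
  G : ℕ → ℕ → ℕ → ℝ
  Fc : ℕ → ℕ → ℝ
  Gc : ℕ → ℕ → ℝ
  out : ℕ → ℝ
  outc : ℝ

namespace PNet

variable (P : PNet)

def pw (k : ℕ) : ℕ := if k = 0 then P.ins else P.w k

def val (x : ℕ → ℝ) : ℕ → ℕ → ℝ
  | 0, j => x j
  | (ℓ+1), m =>
      ((∑ j ∈ range (P.pw ℓ), P.F (ℓ+1) m j * val x ℓ j) + P.Fc (ℓ+1) m)
      * ((∑ j ∈ range (P.pw ℓ), P.G (ℓ+1) m j * val x ℓ j) + P.Gc (ℓ+1) m)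

def FV (x : ℕ → ℝ) (ℓ m : ℕ) : ℝ :=
  (∑ j ∈ range (P.pw (ℓ-1)), P.F ℓ m j * P.val x (ℓ-1) j) + P.Fc ℓ m

def GV (x : ℕ → ℝ) (ℓ m : ℕ) : ℝ :=
  (∑ j ∈ range (P.pw (ℓ-1)), P.G ℓ m j * P.val x (ℓ-1) j) + P.Gc ℓ m

lemma val_succ (x : ℕ → ℝ) (ℓ m : ℕ) (hℓ : 1 ≤ ℓ) :
    P.val x ℓ m = P.FV x ℓ m * P.GV x ℓ m := by
  cases ℓ with
  | zero => omega
  | succ k => simp [val, FV, GV]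

def res (x : ℕ → ℝ) : ℝ :=
  (∑ j ∈ range (P.w P.depth), P.out j * P.val x P.depth j) + P.outc

def toNet : Net where
  L := P.depth + 1
  width := fun k => if k = 0 then P.ins else if k = P.depth + 1 then 1 else 4 * P.w k
  A := fun k i j =>
    if k = P.depth + 1 then P.out (j / 4) * dw j
    else if k = 1 then eps i * (P.F 1 (i/4) j + del i * P.G 1 (i/4) j)
    else eps i * ((P.F k (i/4) (j/4) + del i * P.G k (i/4) (j/4)) * dw j)
  b := fun k i =>
    if k = P.depth + 1 then P.outc
    else eps i * (P.Fc k (i/4) + del i * P.Gc k (i/4))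

lemma eps_ne (i : ℕ) : eps i ≠ 0 := by
  unfold eps; split_ifs <;> norm_num

lemma dw_ne (j : ℕ) : dw j ≠ 0 := by
  unfold dw; split_ifs <;> norm_num

lemma A_one (P : PNet) (hdep : 1 ≤ P.depth) (i j : ℕ) :
    P.toNet.A 1 i j = eps i * (P.F 1 (i/4) j + del i * P.G 1 (i/4) j) := by
  show (if (1:ℕ) = P.depth + 1 then _ else if (1:ℕ) = 1 then _ else _) = _
  rw [if_neg (by omega : (1:ℕ) ≠ P.depth + 1), if_pos rfl]

lemma A_mid (P : PNet) (k : ℕ) (h2 : 2 ≤ k) (hk : k ≤ P.depth) (i j : ℕ) :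
    P.toNet.A k i j = eps i * ((P.F k (i/4) (j/4) + del i * P.G k (i/4) (j/4)) * dw j) := by
  show (if k = P.depth + 1 then _ else if k = 1 then _ else _) = _
  rw [if_neg (by omega), if_neg (by omega)]

lemma sum_quarter (n : ℕ) (c A B : ℕ → ℝ) (f : ℕ → ℝ)
    (hf : ∀ j < 4 * n, f j = repu 2 (eps j * (A (j/4) + del j * B (j/4)))) :
    ∑ j ∈ range (4 * n), c (j/4) * dw j * f j = ∑ m ∈ range n, c m * (A m * B m) := by
  rw [sum_range_four_mul]
  refine sum_congr rfl (fun m hm => ?_)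
  have hm' := mem_range.mp hm
  have h0 : 4 * m < 4 * n := by omega
  have h1 : 4 * m + 1 < 4 * n := by omega
  have h2 : 4 * m + 2 < 4 * n := by omega
  have h3 : 4 * m + 3 < 4 * n := by omega
  rw [hf _ h0, hf _ h1, hf _ h2, hf _ h3]
  have q0 : (4 * m) / 4 = m := by omega
  have q1 : (4 * m + 1) / 4 = m := by omega
  have q2 : (4 * m + 2) / 4 = m := by omega
  have q3 : (4 * m + 3) / 4 = m := by omega
  rw [q0, q1, q2, q3]
  have me : ∀ v : ℕ, v < 4 → eps (4 * m + v) = eps v := by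
    intro v _; unfold eps; congr 1; simp [Nat.add_mul_mod_self_left, Nat.mul_add_mod]; omega
  have md : ∀ v : ℕ, v < 4 → del (4 * m + v) = del v := by
    intro v _; unfold del; congr 1; simp [Nat.mul_add_mod]
  have mw : ∀ v : ℕ, v < 4 → dw (4 * m + v) = dw v := by
    intro v _; unfold dw; congr 1; simp [Nat.mul_add_mod]
  have hz : 4 * m = 4 * m + 0 := by omega
  rw [hz, me 0 (by omega), md 0 (by omega), mw 0 (by omega),
    me 1 (by omega), md 1 (by omega), mw 1 (by omega),
    me 2 (by omega), md 2 (by omega), mw 2 (by omega),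
    me 3 (by omega), md 3 (by omega), mw 3 (by omega)]
  exact quarter (c m) (A m) (B m)

lemma lin_comb (n : ℕ) (F G xx : ℕ → ℝ) (e dl cF cG : ℝ) :
    (∑ j ∈ range n, e * (F j + dl * G j) * xx j) + e * (cF + dl * cG)
      = e * (((∑ j ∈ range n, F j * xx j) + cF) + dl * ((∑ j ∈ range n, G j * xx j) + cG)) := by
  have h : ∀ j ∈ range n, e * (F j + dl * G j) * xx j
      = e * (F j * xx j) + (e * dl) * (G j * xx j) := fun j _ => by ring
  rw [sum_congr rfl h, sum_add_distrib, ← mul_sum, ← mul_sum]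
  ring

lemma fwd_eq (hdep : 1 ≤ P.depth) (x : ℕ → ℝ) :
    ∀ ℓ, 1 ≤ ℓ → ℓ ≤ P.depth → ∀ i,
      P.toNet.fwd (repu 2) x ℓ i
        = repu 2 (eps i * (P.FV x ℓ (i/4) + del i * P.GV x ℓ (i/4))) := by
  intro ℓ
  induction ℓ with
  | zero => omega
  | succ ℓ ih =>
      intro _ hle i
      have hd1 : ℓ + 1 ≠ P.depth + 1 := by omega
      rcases Nat.eq_zero_or_pos ℓ with h0 | h1
      · subst h0
        show repu 2 ((∑ j ∈ range (P.toNet.width 0), P.toNet.A 1 i j * P.toNet.fwd (repu 2) x 0 j)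
            + P.toNet.b 1 i) = _
        have hw : P.toNet.width 0 = P.ins := by simp [toNet]
        have hA : ∀ j, P.toNet.A 1 i j = eps i * (P.F 1 (i/4) j + del i * P.G 1 (i/4) j) := by
          intro j
          show (if (1:ℕ) = P.depth + 1 then _ else if (1:ℕ) = 1 then _ else _) = _
          rw [if_neg (by omega : (1:ℕ) ≠ P.depth + 1), if_pos rfl]
        have hb : P.toNet.b 1 i = eps i * (P.Fc 1 (i/4) + del i * P.Gc 1 (i/4)) := by
          show (if (1:ℕ) = P.depth + 1 then _ else _) = _
          rw [if_neg (by omega : (1:ℕ) ≠ P.depth + 1)]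
        have hf0 : ∀ j, P.toNet.fwd (repu 2) x 0 j = x j := fun j => rfl
        rw [hw, hb]
        simp only [hA, hf0]
        congr 1
        rw [lin_comb]
        simp only [FV, GV, pw, Nat.sub_self, if_pos rfl]
        congr 1
      · -- step case, layer ℓ + 1 with 1 ≤ ℓ
        show repu 2 ((∑ j ∈ range (P.toNet.width ℓ), P.toNet.A (ℓ+1) i j * P.toNet.fwd (repu 2) x ℓ j)
            + P.toNet.b (ℓ+1) i) = _
        have hw : P.toNet.width ℓ = 4 * P.w ℓ := by
          show (if ℓ = 0 then _ else if ℓ = P.depth + 1 then _ else _) = _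
          rw [if_neg (by omega), if_neg (by omega)]
        have hA : ∀ j, P.toNet.A (ℓ+1) i j
            = eps i * ((P.F (ℓ+1) (i/4) (j/4) + del i * P.G (ℓ+1) (i/4) (j/4)) * dw j) := by
          intro j
          show (if ℓ + 1 = P.depth + 1 then _ else if ℓ + 1 = 1 then _ else _) = _
          rw [if_neg hd1, if_neg (by omega)]
        have hb : P.toNet.b (ℓ+1) i = eps i * (P.Fc (ℓ+1) (i/4) + del i * P.Gc (ℓ+1) (i/4)) := by
          show (if ℓ + 1 = P.depth + 1 then _ else _) = _
          rw [if_neg hd1]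
        rw [hw, hb]
        simp only [hA]
        congr 1
        have harr : ∀ j, eps i * ((P.F (ℓ+1) (i/4) (j/4) + del i * P.G (ℓ+1) (i/4) (j/4)) * dw j)
            * P.toNet.fwd (repu 2) x ℓ j
            = eps i * ((fun m => P.F (ℓ+1) (i/4) m + del i * P.G (ℓ+1) (i/4) m) (j/4) * dw j
                * P.toNet.fwd (repu 2) x ℓ j) := fun j => by ring
        rw [sum_congr rfl (fun j _ => harr j), ← mul_sum]
        rw [sum_quarter (P.w ℓ) (fun m => P.F (ℓ+1) (i/4) m + del i * P.G (ℓ+1) (i/4) m)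
          (P.FV x ℓ) (P.GV x ℓ) (P.toNet.fwd (repu 2) x ℓ)
          (fun j _ => ih (by omega) (by omega) j)]
        have hval : ∀ m ∈ range (P.w ℓ),
            (P.F (ℓ+1) (i/4) m + del i * P.G (ℓ+1) (i/4) m) * (P.FV x ℓ m * P.GV x ℓ m)
            = (P.F (ℓ+1) (i/4) m + del i * P.G (ℓ+1) (i/4) m) * P.val x ℓ m := by
          intro m _
          rw [← P.val_succ x ℓ m (by omega)]
        rw [sum_congr rfl hval]
        have split : ∑ m ∈ range (P.w ℓ), (P.F (ℓ+1) (i/4) m + del i * P.G (ℓ+1) (i/4) m) * P.val x ℓ m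
            = (∑ m ∈ range (P.w ℓ), P.F (ℓ+1) (i/4) m * P.val x ℓ m)
              + del i * (∑ m ∈ range (P.w ℓ), P.G (ℓ+1) (i/4) m * P.val x ℓ m) := by
          rw [mul_sum, ← sum_add_distrib]
          exact sum_congr rfl (fun m _ => by ring)
        rw [split]
        have hpw : P.pw ℓ = P.w ℓ := by
          simp only [pw]; rw [if_neg (by omega)]
        simp only [FV, GV, Nat.add_sub_cancel, hpw]
        ring


lemma realize_toNet (hdep : 1 ≤ P.depth) (x : ℕ → ℝ) :
    P.toNet.realize (repu 2) x 0 = P.res x := by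
  show (∑ j ∈ range (P.toNet.width (P.toNet.L - 1)),
      P.toNet.A P.toNet.L 0 j * P.toNet.fwd (repu 2) x (P.toNet.L - 1) j) + P.toNet.b P.toNet.L 0
      = P.res x
  have hL : P.toNet.L = P.depth + 1 := rfl
  have hL1 : P.toNet.L - 1 = P.depth := by rw [hL]; omega
  have hw : P.toNet.width P.depth = 4 * P.w P.depth := by
    show (if P.depth = 0 then _ else if P.depth = P.depth + 1 then _ else _) = _
    rw [if_neg (by omega), if_neg (by omega)]
  have hA : ∀ j, P.toNet.A (P.depth + 1) 0 j = P.out (j/4) * dw j := by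
    intro j
    show (if P.depth + 1 = P.depth + 1 then _ else _) = _
    rw [if_pos rfl]
  have hb : P.toNet.b (P.depth + 1) 0 = P.outc := by
    show (if P.depth + 1 = P.depth + 1 then _ else _) = _
    rw [if_pos rfl]
  rw [hL1, hL, hw, hb]
  simp only [hA]
  have harr : ∀ j, P.out (j/4) * dw j * P.toNet.fwd (repu 2) x P.depth j
      = (fun m => P.out m) (j/4) * dw j * P.toNet.fwd (repu 2) x P.depth j := fun j => rfl
  rw [sum_congr rfl (fun j _ => harr j)]
  rw [sum_quarter (P.w P.depth) (fun m => P.out m) (P.FV x P.depth) (P.GV x P.depth)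
      (P.toNet.fwd (repu 2) x P.depth)
      (fun j _ => P.fwd_eq hdep x P.depth hdep le_rfl j)]
  unfold res
  congr 1
  refine sum_congr rfl (fun m hm => ?_)
  rw [← P.val_succ x P.depth m hdep]

lemma width0_toNet : P.toNet.width 0 = P.ins := rfl

lemma widthL_toNet : P.toNet.width P.toNet.L = 1 := by
  have : P.toNet.L = P.depth + 1 := rfl
  rw [this]
  show (if P.depth + 1 = 0 then P.ins else if P.depth + 1 = P.depth + 1 then 1 else 4 * P.w (P.depth+1)) = 1
  rw [if_neg (by omega), if_pos rfl]

lemma hiddenLayers_toNet : P.toNet.hiddenLayers = P.depth := by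
  show P.depth + 1 - 1 = P.depth
  omega

lemma neurons_toNet (hdep : 1 ≤ P.depth) :
    P.toNet.neurons = ∑ k ∈ Icc 1 P.depth, 4 * P.w k := by
  unfold Net.neurons
  have h1 : P.toNet.L = P.depth + 1 := rfl
  rw [h1, Finset.Ico_add_one_right_eq_Icc]
  refine sum_congr rfl (fun k hk => ?_)
  have hk' := mem_Ico.mp hk
  show (if k = 0 then _ else if k = P.depth + 1 then _ else _) = _
  rw [if_neg (by omega), if_neg (by omega)]

def cF (k : ℕ) : ℕ :=
  (((range (P.w k)) ×ˢ (range (P.pw (k-1)))).filter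
     (fun q => P.F k q.1 q.2 ≠ 0 ∨ P.G k q.1 q.2 ≠ 0)).card

lemma weights_toNet (hdep : 1 ≤ P.depth) :
    P.toNet.nonzeroWeights ≤ (∑ k ∈ Icc 1 P.depth, (16 * P.cF k + 4 * P.w k)) + (4 * P.w P.depth + 1) := by
  unfold Net.nonzeroWeights
  have h1 : P.toNet.L = P.depth + 1 := rfl
  rw [h1, Finset.sum_Icc_succ_top (by omega : 1 ≤ P.depth + 1)]
  have hlast : ((((range (P.toNet.width (P.depth + 1))) ×ˢ
        (range (P.toNet.width (P.depth + 1 - 1)))).filter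
        (fun p => P.toNet.A (P.depth + 1) p.1 p.2 ≠ 0)).card
      + ((range (P.toNet.width (P.depth + 1))).filter
        (fun i => P.toNet.b (P.depth + 1) i ≠ 0)).card) ≤ 4 * P.w P.depth + 1 := by
    have hwL : P.toNet.width (P.depth + 1) = 1 := P.widthL_toNet
    have hwD : P.toNet.width (P.depth + 1 - 1) = 4 * P.w P.depth := by
      have : P.depth + 1 - 1 = P.depth := by omega
      rw [this]
      show (if P.depth = 0 then _ else if P.depth = P.depth + 1 then _ else _) = _
      rw [if_neg (by omega), if_neg (by omega)]
    rw [hwL, hwD]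
    have c1 : (((range 1) ×ˢ (range (4 * P.w P.depth))).filter
        (fun p => P.toNet.A (P.depth + 1) p.1 p.2 ≠ 0)).card ≤ 4 * P.w P.depth := by
      calc _ ≤ ((range 1) ×ˢ (range (4 * P.w P.depth))).card := card_filter_le _ _
        _ = 4 * P.w P.depth := by rw [card_product, card_range, card_range, one_mul]
    have c2 : ((range 1).filter (fun i => P.toNet.b (P.depth + 1) i ≠ 0)).card ≤ 1 := by
      calc _ ≤ (range 1).card := card_filter_le _ _
        _ = 1 := card_range 1
    omega
  have hmain : ∀ k ∈ Icc 1 P.depth,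
      ((((range (P.toNet.width k)) ×ˢ (range (P.toNet.width (k - 1)))).filter
        (fun p => P.toNet.A k p.1 p.2 ≠ 0)).card
      + ((range (P.toNet.width k)).filter (fun i => P.toNet.b k i ≠ 0)).card)
      ≤ 16 * P.cF k + 4 * P.w k := by
    intro k hk
    have hk' := mem_Icc.mp hk
    have hwk : P.toNet.width k = 4 * P.w k := by
      show (if k = 0 then _ else if k = P.depth + 1 then _ else _) = _
      rw [if_neg (by omega), if_neg (by omega)]
    have cb : ((range (P.toNet.width k)).filter (fun i => P.toNet.b k i ≠ 0)).card ≤ 4 * P.w k := by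
      calc _ ≤ (range (P.toNet.width k)).card := card_filter_le _ _
        _ = 4 * P.w k := by rw [card_range, hwk]
    have cA : (((range (P.toNet.width k)) ×ˢ (range (P.toNet.width (k - 1)))).filter
        (fun p => P.toNet.A k p.1 p.2 ≠ 0)).card ≤ 16 * P.cF k := by
      rcases Nat.eq_or_lt_of_le hk'.1 with hk1 | hk2
      · -- k = 1
        subst hk1
        have hmem : ∀ q ∈ ((range (P.toNet.width 1)) ×ˢ (range (P.toNet.width 0))).filter
            (fun p => P.toNet.A 1 p.1 p.2 ≠ 0),
            (((q.1/4 : ℕ), q.2), ((q.1 % 4 : ℕ), (0:ℕ))) ∈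
              ((((range (P.w 1)) ×ˢ (range (P.pw 0))).filter
                (fun q => P.F 1 q.1 q.2 ≠ 0 ∨ P.G 1 q.1 q.2 ≠ 0)) ×ˢ ((range 4) ×ˢ (range 1))) := by
          intro q hq
          rw [mem_filter, mem_product, mem_range, mem_range, hwk] at hq
          rw [mem_product, mem_filter, mem_product, mem_range, mem_range, mem_product,
            mem_range, mem_range]
          dsimp only
          refine ⟨⟨⟨by omega, ?_⟩, ?_⟩, by omega, by omega⟩
          · have : P.toNet.width 0 = P.pw 0 := rfl
            rw [← this]; exact hq.1.2
          · by_contra hcon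
            push_neg at hcon
            apply hq.2
            rw [P.A_one hdep, hcon.1, hcon.2]
            ring
        have hinj : Set.InjOn (fun q : ℕ × ℕ => (((q.1/4 : ℕ), q.2), ((q.1 % 4 : ℕ), (0:ℕ))))
            ↑(((range (P.toNet.width 1)) ×ˢ (range (P.toNet.width 0))).filter
              (fun p => P.toNet.A 1 p.1 p.2 ≠ 0)) := by
          intro a _ b _ hab
          simp only [Prod.mk.injEq] at hab
          have : a.1 = b.1 := by omega
          exact Prod.ext this hab.1.2
        calc (((range (P.toNet.width 1)) ×ˢ (range (P.toNet.width 0))).filter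
            (fun p => P.toNet.A 1 p.1 p.2 ≠ 0)).card
            ≤ (((((range (P.w 1)) ×ˢ (range (P.pw 0))).filter
                (fun q => P.F 1 q.1 q.2 ≠ 0 ∨ P.G 1 q.1 q.2 ≠ 0)) ×ˢ ((range 4) ×ˢ (range 1)))).card :=
              card_le_card_of_injOn _ hmem hinj
          _ = P.cF 1 * (4 * 1) := by
              simp [cF, card_product]
          _ ≤ 16 * P.cF 1 := by omega
      · -- 2 ≤ k
        have hwk1 : P.toNet.width (k - 1) = 4 * P.w (k-1) := by
          show (if k - 1 = 0 then _ else if k - 1 = P.depth + 1 then _ else _) = _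
          rw [if_neg (by omega), if_neg (by omega)]
        have hpw1 : P.pw (k-1) = P.w (k-1) := by
          show (if k - 1 = 0 then _ else _) = _
          rw [if_neg (by omega)]
        have hmem : ∀ q ∈ ((range (P.toNet.width k)) ×ˢ (range (P.toNet.width (k-1)))).filter
            (fun p => P.toNet.A k p.1 p.2 ≠ 0),
            (((q.1/4 : ℕ), (q.2/4 : ℕ)), ((q.1 % 4 : ℕ), (q.2 % 4 : ℕ))) ∈
              ((((range (P.w k)) ×ˢ (range (P.pw (k-1)))).filter
                (fun q => P.F k q.1 q.2 ≠ 0 ∨ P.G k q.1 q.2 ≠ 0)) ×ˢ ((range 4) ×ˢ (range 4))) := by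
          intro q hq
          rw [mem_filter, mem_product, mem_range, mem_range, hwk, hwk1] at hq
          rw [mem_product, mem_filter, mem_product, mem_range, mem_range, mem_product,
            mem_range, mem_range, hpw1]
          dsimp only
          refine ⟨⟨⟨by omega, by omega⟩, ?_⟩, by omega, by omega⟩
          by_contra hcon
          push_neg at hcon
          apply hq.2
          rw [P.A_mid k (by omega) (by omega), hcon.1, hcon.2]
          ring
        have hinj : Set.InjOn (fun q : ℕ × ℕ => (((q.1/4 : ℕ), (q.2/4 : ℕ)), ((q.1 % 4 : ℕ), (q.2 % 4 : ℕ))))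
            ↑(((range (P.toNet.width k)) ×ˢ (range (P.toNet.width (k-1)))).filter
              (fun p => P.toNet.A k p.1 p.2 ≠ 0)) := by
          intro a _ b _ hab
          simp only [Prod.mk.injEq] at hab
          have h1 : a.1 = b.1 := by omega
          have h2 : a.2 = b.2 := by omega
          exact Prod.ext h1 h2
        calc (((range (P.toNet.width k)) ×ˢ (range (P.toNet.width (k-1)))).filter
            (fun p => P.toNet.A k p.1 p.2 ≠ 0)).card
            ≤ (((((range (P.w k)) ×ˢ (range (P.pw (k-1)))).filter
                (fun q => P.F k q.1 q.2 ≠ 0 ∨ P.G k q.1 q.2 ≠ 0)) ×ˢ ((range 4) ×ˢ (range 4)))).card :=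
              card_le_card_of_injOn _ hmem hinj
          _ = P.cF k * (4 * 4) := by
              simp [cF, card_product]
          _ ≤ 16 * P.cF k := by omega
    omega
  exact Nat.add_le_add (Finset.sum_le_sum hmain) hlast

end PNet

section Combinatorics

lemma clog2_le_log2_succ (n : ℕ) : Nat.clog 2 n ≤ Nat.log 2 n + 1 := by
  rw [Nat.clog_le_iff_le_pow (by norm_num)]
  have := Nat.lt_pow_succ_log_self (by norm_num : 1 < 2) n
  omega

lemma clog2_le_self (n : ℕ) : Nat.clog 2 n ≤ n := by
  rw [Nat.clog_le_iff_le_pow (by norm_num)]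
  have := Nat.lt_two_pow_self (n := n)
  omega

lemma clog2_add_le (x y : ℕ) (hy : 1 ≤ y) :
    Nat.clog 2 (x + y) ≤ (Nat.log 2 x + 1) + Nat.clog 2 y := by
  rw [Nat.clog_le_iff_le_pow (by norm_num)]
  have h1 : x + 1 ≤ 2 ^ (Nat.log 2 x + 1) := Nat.lt_pow_succ_log_self (by norm_num) x
  have h2 : y ≤ 2 ^ Nat.clog 2 y := Nat.le_pow_clog (by norm_num) y
  calc x + y ≤ (x + 1) * y := by nlinarith
    _ ≤ 2 ^ (Nat.log 2 x + 1) * 2 ^ Nat.clog 2 y := Nat.mul_le_mul h1 h2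
    _ = 2 ^ (Nat.log 2 x + 1 + Nat.clog 2 y) := (pow_add 2 _ _).symm

lemma clog2_sum_le {ι : Type*} (s : Finset ι) (f : ι → ℕ) :
    Nat.clog 2 (∑ i ∈ s, f i) ≤ (∑ i ∈ s, Nat.log 2 (f i)) + s.card := by
  classical
  induction s using Finset.induction with
  | empty => simp
  | insert a s ha ih =>
      rw [Finset.sum_insert ha, Finset.sum_insert ha, Finset.card_insert_of_notMem ha]
      rcases Nat.eq_zero_or_pos (∑ i ∈ s, f i) with h0 | h0
      · rw [h0, Nat.add_zero]
        have := clog2_le_log2_succ (f a)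
        omega
      · have := clog2_add_le (f a) (∑ i ∈ s, f i) h0
        omega

variable {d : ℕ}

def deg (α : Fin d →₀ ℕ) : ℕ := ∑ i, α i

def tL (α : Fin d →₀ ℕ) : ℕ := Nat.clog 2 (deg α)

lemma card_toMultiset_eq_deg (α : Fin d →₀ ℕ) :
    Multiset.card (Finsupp.toMultiset α) = deg α := by
  rw [Finsupp.card_toMultiset, deg]
  rw [Finsupp.sum_fintype]
  · rfl
  · intro i; rfl

def takeF (α : Fin d →₀ ℕ) (k : ℕ) : Fin d →₀ ℕ :=
  Multiset.toFinsupp (↑((Finsupp.toMultiset α).toList.take k))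

def dropF (α : Fin d →₀ ℕ) (k : ℕ) : Fin d →₀ ℕ :=
  Multiset.toFinsupp (↑((Finsupp.toMultiset α).toList.drop k))

lemma takeF_add_dropF (α : Fin d →₀ ℕ) (k : ℕ) : takeF α k + dropF α k = α := by
  ext i
  rw [Finsupp.add_apply, takeF, dropF, Multiset.toFinsupp_apply, Multiset.toFinsupp_apply,
    Multiset.coe_count, Multiset.coe_count]
  rw [← List.count_append, List.take_append_drop]
  rw [← Multiset.coe_count, Multiset.coe_toList, Finsupp.count_toMultiset]

lemma takeF_le (α : Fin d →₀ ℕ) (k : ℕ) : takeF α k ≤ α := by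
  have h := takeF_add_dropF α k
  intro i
  have : takeF α k i + dropF α k i = α i := by
    rw [← Finsupp.add_apply, h]
  omega

lemma dropF_le (α : Fin d →₀ ℕ) (k : ℕ) : dropF α k ≤ α := by
  have h := takeF_add_dropF α k
  intro i
  have : takeF α k i + dropF α k i = α i := by
    rw [← Finsupp.add_apply, h]
  omega

lemma deg_add (α β : Fin d →₀ ℕ) : deg (α + β) = deg α + deg β := by
  unfold deg
  rw [← Finset.sum_add_distrib]
  exact Finset.sum_congr rfl (fun i _ => Finsupp.add_apply α β i)

lemma deg_takeF (α : Fin d →₀ ℕ) (k : ℕ) (h : k ≤ deg α) : deg (takeF α k) = k := by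
  rw [← card_toMultiset_eq_deg, takeF]
  have hs : Finsupp.toMultiset (Multiset.toFinsupp (↑((Finsupp.toMultiset α).toList.take k)))
      = (↑((Finsupp.toMultiset α).toList.take k) : Multiset (Fin d)) := by simp
  rw [hs, Multiset.coe_card, List.length_take, Multiset.length_toList, card_toMultiset_eq_deg]
  omega

def h1F (α : Fin d →₀ ℕ) : Fin d →₀ ℕ := takeF α ((deg α + 1) / 2)
def h2F (α : Fin d →₀ ℕ) : Fin d →₀ ℕ := dropF α ((deg α + 1) / 2)

lemma h1F_add_h2F (α : Fin d →₀ ℕ) : h1F α + h2F α = α := takeF_add_dropF α _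

lemma deg_h1F (α : Fin d →₀ ℕ) (h : 1 ≤ deg α) : deg (h1F α) = (deg α + 1) / 2 :=
  deg_takeF α _ (by omega)

lemma deg_h2F (α : Fin d →₀ ℕ) (h : 1 ≤ deg α) : deg (h2F α) = deg α / 2 := by
  have h1 := h1F_add_h2F α
  have h2 : deg (h1F α) + deg (h2F α) = deg α := by rw [← deg_add, h1]
  rw [deg_h1F α h] at h2
  omega

lemma tL_h1F (α : Fin d →₀ ℕ) (h : 2 ≤ deg α) : tL (h1F α) + 1 = tL α := by
  unfold tL
  rw [deg_h1F α (by omega)]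
  rw [Nat.clog_of_two_le (by norm_num) h]
  norm_num

lemma tL_h2F_ub (α : Fin d →₀ ℕ) (h : 2 ≤ deg α) : tL (h2F α) + 1 ≤ tL α := by
  rw [← tL_h1F α h]
  have : deg (h2F α) ≤ deg (h1F α) := by
    rw [deg_h1F α (by omega), deg_h2F α (by omega)]; omega
  exact Nat.add_le_add_right (Nat.clog_mono_right 2 this) 1

lemma tL_h2F_lb (α : Fin d →₀ ℕ) (h : 2 ≤ deg α) : tL α ≤ tL (h2F α) + 2 := by
  unfold tL
  rw [deg_h2F α (by omega)]
  rw [Nat.clog_le_iff_le_pow (by norm_num)]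
  have h2 : deg α / 2 ≤ 2 ^ Nat.clog 2 (deg α / 2) := Nat.le_pow_clog (by norm_num) _
  have : (2:ℕ) ^ (Nat.clog 2 (deg α / 2) + 2) = 4 * 2 ^ Nat.clog 2 (deg α / 2) := by ring
  rw [this]
  omega

lemma deg_ge_two_of_tL_pos (α : Fin d →₀ ℕ) (h : 1 ≤ tL α) : 2 ≤ deg α := by
  by_contra hc
  push_neg at hc
  have : tL α = 0 := Nat.clog_of_right_le_one (by omega) 2
  omega

lemma deg_one_single (α : Fin d →₀ ℕ) (h : deg α = 1) : ∃ i, α = Finsupp.single i 1 := by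
  have hc : Multiset.card (Finsupp.toMultiset α) = 1 := by rw [card_toMultiset_eq_deg, h]
  obtain ⟨i, hi⟩ := Multiset.card_eq_one.mp hc
  refine ⟨i, ?_⟩
  have h2 := congrArg Multiset.toFinsupp hi
  rw [Multiset.toFinsupp_singleton] at h2
  rw [← h2]
  simp

def mono (x : ℕ → ℝ) (α : Fin d →₀ ℕ) : ℝ := ∏ i : Fin d, x (i : ℕ) ^ α i

lemma mono_add (x : ℕ → ℝ) (α β : Fin d →₀ ℕ) : mono x (α + β) = mono x α * mono x β := by
  unfold mono
  rw [← Finset.prod_mul_distrib]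
  refine Finset.prod_congr rfl (fun i _ => ?_)
  rw [Finsupp.add_apply, pow_add]

lemma mono_single (x : ℕ → ℝ) (i : Fin d) : mono x (Finsupp.single i 1) = x (i : ℕ) := by
  unfold mono
  rw [Finset.prod_eq_single i]
  · rw [Finsupp.single_eq_same, pow_one]
  · intro j _ hj
    rw [Finsupp.single_eq_of_ne' (Ne.symm hj), pow_zero]
  · intro h; exact absurd (Finset.mem_univ i) h

end Combinatorics

section Instance

variable {d : ℕ}

def SSet (Λ : Finset (Fin d →₀ ℕ)) (ℓ : ℕ) : Finset (Fin d →₀ ℕ) :=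
  Λ.filter (fun α => deg α ≠ 0 ∧ (tL α = ℓ ∨ tL α + 1 = ℓ))

def TT (Λ : Finset (Fin d →₀ ℕ)) : ℕ := max 1 (Λ.sup tL)

def pos (Λ : Finset (Fin d →₀ ℕ)) (ℓ : ℕ) (β : Fin d →₀ ℕ) : ℕ :=
  if h : β ∈ SSet Λ ℓ then ((SSet Λ ℓ).equivFin ⟨β, h⟩ : Fin _) else (SSet Λ ℓ).card

def decd (Λ : Finset (Fin d →₀ ℕ)) (ℓ k : ℕ) : Fin d →₀ ℕ :=
  if h : k < (SSet Λ ℓ).card then (((SSet Λ ℓ).equivFin.symm ⟨k, h⟩ : {x // x ∈ SSet Λ ℓ}) : Fin d →₀ ℕ)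
  else 0

variable (Λ : Finset (Fin d →₀ ℕ))

lemma pos_lt {ℓ : ℕ} {β : Fin d →₀ ℕ} (h : β ∈ SSet Λ ℓ) :
    pos Λ ℓ β < (SSet Λ ℓ).card := by
  rw [pos, dif_pos h]
  exact ((SSet Λ ℓ).equivFin ⟨β, h⟩).isLt

lemma decd_pos {ℓ : ℕ} {β : Fin d →₀ ℕ} (h : β ∈ SSet Λ ℓ) :
    decd Λ ℓ (pos Λ ℓ β) = β := by
  rw [pos, dif_pos h, decd, dif_pos ((SSet Λ ℓ).equivFin ⟨β, h⟩).isLt]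
  have : (⟨(((SSet Λ ℓ).equivFin ⟨β, h⟩ : Fin _) : ℕ), ((SSet Λ ℓ).equivFin ⟨β, h⟩).isLt⟩ : Fin (SSet Λ ℓ).card)
      = (SSet Λ ℓ).equivFin ⟨β, h⟩ := rfl
  rw [this, Equiv.symm_apply_apply]

lemma decd_mem {ℓ k : ℕ} (h : k < (SSet Λ ℓ).card) : decd Λ ℓ k ∈ SSet Λ ℓ := by
  rw [decd, dif_pos h]
  exact ((SSet Λ ℓ).equivFin.symm ⟨k, h⟩).2

lemma pos_decd {ℓ k : ℕ} (h : k < (SSet Λ ℓ).card) : pos Λ ℓ (decd Λ ℓ k) = k := by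
  rw [decd, dif_pos h, pos, dif_pos ((SSet Λ ℓ).equivFin.symm ⟨k, h⟩).2]
  have : (⟨(((SSet Λ ℓ).equivFin.symm ⟨k, h⟩ : {x // x ∈ SSet Λ ℓ}) : Fin d →₀ ℕ),
      ((SSet Λ ℓ).equivFin.symm ⟨k, h⟩).2⟩ : {x // x ∈ SSet Λ ℓ})
      = (SSet Λ ℓ).equivFin.symm ⟨k, h⟩ := rfl
  rw [this, Equiv.apply_symm_apply]

lemma sum_decd {M : Type*} [AddCommMonoid M] (ℓ : ℕ) (g : (Fin d →₀ ℕ) → M) :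
    ∑ k ∈ range (SSet Λ ℓ).card, g (decd Λ ℓ k) = ∑ β ∈ SSet Λ ℓ, g β := by
  refine Finset.sum_nbij' (fun k => decd Λ ℓ k) (fun β => pos Λ ℓ β) ?_ ?_ ?_ ?_ ?_
  · intro k hk; exact decd_mem Λ (mem_range.mp hk)
  · intro β hβ; exact mem_range.mpr (pos_lt Λ hβ)
  · intro k hk; exact pos_decd Λ (mem_range.mp hk)
  · intro β hβ; exact decd_pos Λ hβ
  · intro k hk; rfl

def cref (ℓ : ℕ) (β : Fin d →₀ ℕ) : ℕ → ℝ :=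
  if ℓ = 1 then (fun j => if h : j < d then (β ⟨j, h⟩ : ℝ) else 0)
  else (fun j => if j = pos Λ (ℓ-1) β then 1 else 0)

variable (p : MvPolynomial (Fin d) ℝ)

def accF (ℓ : ℕ) : ℕ → ℝ :=
  if ℓ = 1 then (fun j => ∑ α ∈ Λ.filter (fun α => deg α = 1), (p.coeff α) * cref Λ 1 α j)
  else (fun j => (if j = (SSet Λ (ℓ-1)).card then 1 else 0)
      + (if h : j < (SSet Λ (ℓ-1)).card then
          (if tL (decd Λ (ℓ-1) j) + 1 = ℓ then p.coeff (decd Λ (ℓ-1) j) else 0) else 0))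

def PP : PNet where
  depth := TT Λ
  ins := d
  w := fun ℓ => (SSet Λ ℓ).card + 1
  F := fun ℓ m j =>
    if m < (SSet Λ ℓ).card then
      (if tL (decd Λ ℓ m) = ℓ then cref Λ ℓ (h1F (decd Λ ℓ m)) j else cref Λ ℓ (decd Λ ℓ m) j)
    else if m = (SSet Λ ℓ).card then accF Λ p ℓ j else 0
  G := fun ℓ m j =>
    if m < (SSet Λ ℓ).card ∧ tL (decd Λ ℓ m) = ℓ then cref Λ ℓ (h2F (decd Λ ℓ m)) j else 0
  Fc := fun ℓ m => if m = (SSet Λ ℓ).card ∧ ℓ = 1 then p.coeff 0 else 0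
  Gc := fun ℓ m => if m < (SSet Λ ℓ).card ∧ tL (decd Λ ℓ m) = ℓ then 0 else 1
  out := fun j =>
    if j = (SSet Λ (TT Λ)).card then 1
    else if h : j < (SSet Λ (TT Λ)).card then
      (if tL (decd Λ (TT Λ) j) = TT Λ then p.coeff (decd Λ (TT Λ) j) else 0) else 0
  outc := 0

def ACCp (x : ℕ → ℝ) (ℓ : ℕ) : ℝ :=
  ∑ α ∈ Λ.filter (fun α => deg α = 0 ∨ tL α < ℓ), (p.coeff α) * mono x α

lemma cref_one_sum (x : ℕ → ℝ) (β : Fin d →₀ ℕ) (hβ : deg β = 1) :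
    ∑ j ∈ range d, cref Λ 1 β j * x j = mono x β := by
  obtain ⟨i, rfl⟩ := deg_one_single β hβ
  rw [mono_single]
  rw [← Fin.sum_univ_eq_sum_range (fun j => cref Λ 1 (Finsupp.single i 1) j * x j) d]
  have hc : cref Λ 1 (Finsupp.single i 1)
      = fun j => if h : j < d then (((Finsupp.single i 1 : Fin d →₀ ℕ) ⟨j, h⟩ : ℕ) : ℝ) else 0 := by
    rw [cref, if_pos rfl]
  rw [Finset.sum_eq_single i]
  · have h : ((i : ℕ)) < d := i.isLt
    rw [hc]
    dsimp only
    rw [dif_pos h]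
    have he : (⟨(i : ℕ), h⟩ : Fin d) = i := Fin.eta i h
    rw [he, Finsupp.single_eq_same]
    norm_num
  · intro j _ hj
    have h : ((j : ℕ)) < d := j.isLt
    rw [hc]
    dsimp only
    rw [dif_pos h]
    have he : (⟨(j : ℕ), h⟩ : Fin d) = j := Fin.eta j h
    rw [he, Finsupp.single_eq_of_ne' (Ne.symm hj)]
    norm_num
  · intro h; exact absurd (Finset.mem_univ i) h

lemma cref_sum (x : ℕ → ℝ) (ℓ : ℕ) (h2 : 2 ≤ ℓ) (β : Fin d →₀ ℕ) (hβ : β ∈ SSet Λ (ℓ-1))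
    (v : ℕ → ℝ) (hIH : ∀ m, m < (SSet Λ (ℓ-1)).card → v m = mono x (decd Λ (ℓ-1) m)) :
    ∑ j ∈ range ((SSet Λ (ℓ-1)).card + 1), cref Λ ℓ β j * v j = mono x β := by
  have hcref : cref Λ ℓ β = fun j => if j = pos Λ (ℓ-1) β then (1:ℝ) else 0 := by
    rw [cref, if_neg (by omega)]
  rw [hcref]
  rw [Finset.sum_congr rfl (fun j _ => by
    show (if j = pos Λ (ℓ-1) β then (1:ℝ) else 0) * v j = if j = pos Λ (ℓ-1) β then v j else 0
    split_ifs <;> ring)]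
  rw [Finset.sum_ite_eq' (range ((SSet Λ (ℓ-1)).card + 1)) (pos Λ (ℓ-1) β) v]
  rw [if_pos (mem_range.mpr (by have := pos_lt Λ hβ; omega))]
  rw [hIH _ (pos_lt Λ hβ), decd_pos Λ hβ]

lemma sum_deg_zero (hsupp : p.support ⊆ Λ) (x : ℕ → ℝ) :
    ∑ α ∈ Λ.filter (fun α => deg α = 0), p.coeff α * mono x α = p.coeff 0 := by
  have hz : ∀ α : Fin d →₀ ℕ, deg α = 0 → α = 0 := by
    intro α hα
    have h0 : ∀ i ∈ (univ : Finset (Fin d)), α i = 0 := by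
      intro i _
      have := Finset.sum_eq_zero_iff.mp hα
      exact this i (mem_univ i)
    ext i
    exact h0 i (mem_univ i)
  have hsub : Λ.filter (fun α => deg α = 0) ⊆ {0} := by
    intro α hα
    rw [mem_filter] at hα
    rw [mem_singleton]
    exact hz α hα.2
  by_cases h0 : (0 : Fin d →₀ ℕ) ∈ Λ
  · have : Λ.filter (fun α => deg α = 0) = {0} := by
      apply Finset.Subset.antisymm hsub
      intro α hα
      rw [mem_singleton] at hα
      subst hα
      rw [mem_filter]
      exact ⟨h0, by simp [deg]⟩
    rw [this, Finset.sum_singleton]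
    have : mono x (0 : Fin d →₀ ℕ) = 1 := by simp [mono]
    rw [this, mul_one]
  · have hc0 : p.coeff 0 = 0 := by
      by_contra hc
      exact h0 (hsupp (MvPolynomial.mem_support_iff.mpr hc))
    have : Λ.filter (fun α => deg α = 0) = ∅ := by
      rw [Finset.eq_empty_iff_forall_notMem]
      intro α hα
      have := hsub hα
      rw [mem_singleton] at this
      subst this
      rw [mem_filter] at hα
      exact h0 hα.1
    rw [this, Finset.sum_empty, hc0]


lemma PP_pw_zero : (PP Λ p).pw 0 = d := rfl

lemma PP_pw_pos (ℓ : ℕ) (h : 1 ≤ ℓ) : (PP Λ p).pw ℓ = (SSet Λ ℓ).card + 1 := by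
  show (if ℓ = 0 then d else (SSet Λ ℓ).card + 1) = _
  rw [if_neg (by omega)]

lemma tL_eq_one_deg (α : Fin d →₀ ℕ) (h : tL α = 1) : deg α = 2 := by
  have hge : 2 ≤ deg α := deg_ge_two_of_tL_pos α (by omega)
  by_contra hne
  have h3 : 2 ^ 1 < deg α := by omega
  have : 1 < tL α := by
    rw [tL, Nat.lt_clog_iff_pow_lt (by norm_num)]
    exact h3
  omega

lemma deg_one_of_tL_zero (α : Fin d →₀ ℕ) (h : tL α = 0) (h2 : deg α ≠ 0) : deg α = 1 := by
  by_contra hne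
  have : 0 < tL α := Nat.clog_pos (by norm_num) (by omega)
  omega

lemma tL_zero_of_deg_le_one (α : Fin d →₀ ℕ) (h : deg α ≤ 1) : tL α = 0 :=
  Nat.clog_of_right_le_one h 2

lemma val_correct (hdc : ∀ α ∈ Λ, ∀ β : Fin d →₀ ℕ, β ≤ α → β ∈ Λ) (hsupp : p.support ⊆ Λ)
    (x : ℕ → ℝ) : ∀ ℓ, 1 ≤ ℓ →
    (∀ m, m < (SSet Λ ℓ).card → (PP Λ p).val x ℓ m = mono x (decd Λ ℓ m))
    ∧ ((PP Λ p).val x ℓ ((SSet Λ ℓ).card) = ACCp Λ p x ℓ) := by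
  intro L0
  induction L0 with
  | zero => omega
  | succ ℓ ih =>
    intro _
    have hFc0 : ∀ m, m < (SSet Λ (ℓ+1)).card → (PP Λ p).Fc (ℓ+1) m = 0 := by
      intro m hm
      show (if m = (SSet Λ (ℓ+1)).card ∧ ℓ + 1 = 1 then p.coeff 0 else 0) = 0
      rw [if_neg (by omega)]
    have hG0 : ∀ m, ¬ (m < (SSet Λ (ℓ+1)).card ∧ tL (decd Λ (ℓ+1) m) = ℓ+1) →
        ((PP Λ p).G (ℓ+1) m = fun _ => 0) ∧ (PP Λ p).Gc (ℓ+1) m = 1 := by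
      intro m hm
      constructor
      · funext j
        show (if m < (SSet Λ (ℓ+1)).card ∧ tL (decd Λ (ℓ+1) m) = ℓ+1
            then cref Λ (ℓ+1) (h2F (decd Λ (ℓ+1) m)) j else 0) = 0
        rw [if_neg hm]
      · show (if m < (SSet Λ (ℓ+1)).card ∧ tL (decd Λ (ℓ+1) m) = ℓ+1 then (0:ℝ) else 1) = 1
        rw [if_neg hm]
    have hGV1 : ∀ m, ¬ (m < (SSet Λ (ℓ+1)).card ∧ tL (decd Λ (ℓ+1) m) = ℓ+1) →
        (PP Λ p).GV x (ℓ+1) m = 1 := by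
      intro m hm
      obtain ⟨hG, hGc⟩ := hG0 m hm
      show (∑ j ∈ range ((PP Λ p).pw (ℓ+1-1)), (PP Λ p).G (ℓ+1) m j * (PP Λ p).val x ℓ j)
          + (PP Λ p).Gc (ℓ+1) m = 1
      rw [hG, hGc]
      simp
    rcases Nat.eq_zero_or_pos ℓ with h0 | h1
    · -- layer 1
      subst h0
      constructor
      · intro m hm
        set α := decd Λ 1 m with hα
        have hmem : α ∈ SSet Λ 1 := decd_mem Λ hm
        rw [SSet, mem_filter] at hmem
        obtain ⟨hαΛ, hdne, hcond⟩ := hmem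
        rw [(PP Λ p).val_succ x 1 m le_rfl]
        by_cases hfresh : tL α = 1
        · have hdeg2 : deg α = 2 := tL_eq_one_deg α hfresh
          have hd1 : deg (h1F α) = 1 := by rw [deg_h1F α (by omega), hdeg2]
          have hd2 : deg (h2F α) = 1 := by rw [deg_h2F α (by omega), hdeg2]
          have hFV : (PP Λ p).FV x 1 m = mono x (h1F α) := by
            show (∑ j ∈ range ((PP Λ p).pw 0), (PP Λ p).F 1 m j * (PP Λ p).val x 0 j)
                + (PP Λ p).Fc 1 m = _
            rw [hFc0 m hm, PP_pw_zero, add_zero]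
            have hFj : ∀ j, (PP Λ p).F 1 m j = cref Λ 1 (h1F α) j := by
              intro j
              show (if m < (SSet Λ 1).card then
                  (if tL (decd Λ 1 m) = 1 then cref Λ 1 (h1F (decd Λ 1 m)) j
                    else cref Λ 1 (decd Λ 1 m) j)
                else if m = (SSet Λ 1).card then accF Λ p 1 j else 0) = _
              rw [if_pos hm, if_pos hfresh]
            rw [Finset.sum_congr rfl (fun j _ => by rw [hFj j])]
            exact cref_one_sum Λ x (h1F α) hd1
          have hGV : (PP Λ p).GV x 1 m = mono x (h2F α) := by
            show (∑ j ∈ range ((PP Λ p).pw 0), (PP Λ p).G 1 m j * (PP Λ p).val x 0 j)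
                + (PP Λ p).Gc 1 m = _
            have hGj : ∀ j, (PP Λ p).G 1 m j = cref Λ 1 (h2F α) j := by
              intro j
              show (if m < (SSet Λ 1).card ∧ tL (decd Λ 1 m) = 1
                  then cref Λ 1 (h2F (decd Λ 1 m)) j else 0) = _
              rw [if_pos ⟨hm, hfresh⟩]
            have hGc : (PP Λ p).Gc 1 m = 0 := by
              show (if m < (SSet Λ 1).card ∧ tL (decd Λ 1 m) = 1 then (0:ℝ) else 1) = 0
              rw [if_pos ⟨hm, hfresh⟩]
            rw [hGc, PP_pw_zero, add_zero]
            rw [Finset.sum_congr rfl (fun j _ => by rw [hGj j])]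
            exact cref_one_sum Λ x (h2F α) hd2
          rw [hFV, hGV, ← mono_add, h1F_add_h2F]
        · have hdeg1 : deg α = 1 := by
            have : tL α = 0 := by omega
            exact deg_one_of_tL_zero α this hdne
          have hFV : (PP Λ p).FV x 1 m = mono x α := by
            show (∑ j ∈ range ((PP Λ p).pw 0), (PP Λ p).F 1 m j * (PP Λ p).val x 0 j)
                + (PP Λ p).Fc 1 m = _
            rw [hFc0 m hm, PP_pw_zero, add_zero]
            have hFj : ∀ j, (PP Λ p).F 1 m j = cref Λ 1 α j := by
              intro j
              show (if m < (SSet Λ 1).card then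
                  (if tL (decd Λ 1 m) = 1 then cref Λ 1 (h1F (decd Λ 1 m)) j
                    else cref Λ 1 (decd Λ 1 m) j)
                else if m = (SSet Λ 1).card then accF Λ p 1 j else 0) = _
              rw [if_pos hm, if_neg hfresh]
            rw [Finset.sum_congr rfl (fun j _ => by rw [hFj j])]
            exact cref_one_sum Λ x α hdeg1
          rw [hGV1 m (by intro hcon; exact hfresh hcon.2), hFV, mul_one]
      · -- accumulator at layer 1
        rw [(PP Λ p).val_succ x 1 _ le_rfl]
        have hmne : ¬ ((SSet Λ 1).card < (SSet Λ 1).card ∧ tL (decd Λ 1 (SSet Λ 1).card) = 1) := by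
          intro hcon; omega
        rw [hGV1 _ hmne, mul_one]
        show (∑ j ∈ range ((PP Λ p).pw 0), (PP Λ p).F 1 (SSet Λ 1).card j * (PP Λ p).val x 0 j)
            + (PP Λ p).Fc 1 (SSet Λ 1).card = _
        have hFj : ∀ j, (PP Λ p).F 1 (SSet Λ 1).card j = accF Λ p 1 j := by
          intro j
          show (if (SSet Λ 1).card < (SSet Λ 1).card then
              (if tL (decd Λ 1 (SSet Λ 1).card) = 1 then cref Λ 1 (h1F (decd Λ 1 (SSet Λ 1).card)) j
                else cref Λ 1 (decd Λ 1 (SSet Λ 1).card) j)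
            else if (SSet Λ 1).card = (SSet Λ 1).card then accF Λ p 1 j else 0) = _
          rw [if_neg (by omega), if_pos rfl]
        have hFcv : (PP Λ p).Fc 1 (SSet Λ 1).card = p.coeff 0 := by
          show (if (SSet Λ 1).card = (SSet Λ 1).card ∧ (1:ℕ) = 1 then p.coeff 0 else 0) = _
          rw [if_pos ⟨rfl, rfl⟩]
        rw [hFcv, PP_pw_zero]
        have haccj : ∀ j, accF Λ p 1 j
            = ∑ α ∈ Λ.filter (fun α => deg α = 1), (p.coeff α) * cref Λ 1 α j := by
          intro j
          show (if (1:ℕ) = 1 then (fun j => ∑ α ∈ Λ.filter (fun α => deg α = 1),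
              (p.coeff α) * cref Λ 1 α j) else _) j = _
          rw [if_pos rfl]
        have hsum : ∑ j ∈ range d, accF Λ p 1 j * (PP Λ p).val x 0 j
            = ∑ α ∈ Λ.filter (fun α => deg α = 1), (p.coeff α) * mono x α := by
          have hstep : ∀ j ∈ range d, accF Λ p 1 j * (PP Λ p).val x 0 j
              = ∑ α ∈ Λ.filter (fun α => deg α = 1),
                  (p.coeff α) * (cref Λ 1 α j * (PP Λ p).val x 0 j) := by
            intro j _
            rw [haccj j, Finset.sum_mul]
            exact Finset.sum_congr rfl (fun α _ => by ring)
          rw [Finset.sum_congr rfl hstep, Finset.sum_comm]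
          refine Finset.sum_congr rfl (fun α hα => ?_)
          rw [← Finset.mul_sum]
          congr 1
          have hd1 : deg α = 1 := (mem_filter.mp hα).2
          exact cref_one_sum Λ x α hd1
        rw [Finset.sum_congr rfl (fun j _ => by rw [hFj j]), hsum]
        have hsplit : Λ.filter (fun α => deg α = 0 ∨ tL α < 1)
            = Λ.filter (fun α => deg α = 0) ∪ Λ.filter (fun α => deg α = 1) := by
          ext α
          simp only [mem_filter, mem_union]
          constructor
          · rintro ⟨hΛ, hc⟩
            rcases hc with hc | hc
            · exact Or.inl ⟨hΛ, hc⟩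
            · have h0 : tL α = 0 := by omega
              by_cases hd : deg α = 0
              · exact Or.inl ⟨hΛ, hd⟩
              · exact Or.inr ⟨hΛ, deg_one_of_tL_zero α h0 hd⟩
          · rintro (⟨hΛ, hc⟩ | ⟨hΛ, hc⟩)
            · exact ⟨hΛ, Or.inl hc⟩
            · refine ⟨hΛ, Or.inr ?_⟩
              have := tL_zero_of_deg_le_one α (by omega)
              omega
        have hdisj : Disjoint (Λ.filter (fun α => deg α = 0)) (Λ.filter (fun α => deg α = 1)) := by
          rw [Finset.disjoint_left]
          intro α h1 h2
          rw [mem_filter] at h1 h2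
          omega
        rw [ACCp, hsplit, Finset.sum_union hdisj, sum_deg_zero Λ p hsupp x]
        ring
    · -- layer ℓ+1, ℓ ≥ 1
      obtain ⟨IH1, IH2⟩ := ih h1
      constructor
      · intro m hm
        set α := decd Λ (ℓ+1) m with hα
        have hmem : α ∈ SSet Λ (ℓ+1) := decd_mem Λ hm
        rw [SSet, mem_filter] at hmem
        obtain ⟨hαΛ, hdne, hcond⟩ := hmem
        rw [(PP Λ p).val_succ x (ℓ+1) m (by omega)]
        by_cases hfresh : tL α = ℓ+1
        · have hdeg2 : 2 ≤ deg α := deg_ge_two_of_tL_pos α (by omega)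
          have hm1 : h1F α ∈ SSet Λ ℓ := by
            rw [SSet, mem_filter]
            refine ⟨hdc α hαΛ (h1F α) (takeF_le α _), ?_, Or.inl ?_⟩
            · have := deg_h1F α (by omega); omega
            · have := tL_h1F α hdeg2; omega
          have hm2 : h2F α ∈ SSet Λ ℓ := by
            rw [SSet, mem_filter]
            refine ⟨hdc α hαΛ (h2F α) (dropF_le α _), ?_, ?_⟩
            · have := deg_h2F α (by omega); omega
            · have hub := tL_h2F_ub α hdeg2
              have hlb := tL_h2F_lb α hdeg2
              omega
          have hFV : (PP Λ p).FV x (ℓ+1) m = mono x (h1F α) := by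
            show (∑ j ∈ range ((PP Λ p).pw ℓ), (PP Λ p).F (ℓ+1) m j * (PP Λ p).val x ℓ j)
                + (PP Λ p).Fc (ℓ+1) m = _
            rw [hFc0 m hm, add_zero, PP_pw_pos Λ p ℓ h1]
            have hFj : ∀ j, (PP Λ p).F (ℓ+1) m j = cref Λ (ℓ+1) (h1F α) j := by
              intro j
              show (if m < (SSet Λ (ℓ+1)).card then
                  (if tL (decd Λ (ℓ+1) m) = ℓ+1 then cref Λ (ℓ+1) (h1F (decd Λ (ℓ+1) m)) j
                    else cref Λ (ℓ+1) (decd Λ (ℓ+1) m) j)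
                else if m = (SSet Λ (ℓ+1)).card then accF Λ p (ℓ+1) j else 0) = _
              rw [if_pos hm, if_pos hfresh]
            rw [Finset.sum_congr rfl (fun j _ => by rw [hFj j])]
            exact cref_sum Λ x (ℓ+1) (by omega) (h1F α) hm1 _ IH1
          have hGV : (PP Λ p).GV x (ℓ+1) m = mono x (h2F α) := by
            show (∑ j ∈ range ((PP Λ p).pw ℓ), (PP Λ p).G (ℓ+1) m j * (PP Λ p).val x ℓ j)
                + (PP Λ p).Gc (ℓ+1) m = _
            have hGj : ∀ j, (PP Λ p).G (ℓ+1) m j = cref Λ (ℓ+1) (h2F α) j := by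
              intro j
              show (if m < (SSet Λ (ℓ+1)).card ∧ tL (decd Λ (ℓ+1) m) = ℓ+1
                  then cref Λ (ℓ+1) (h2F (decd Λ (ℓ+1) m)) j else 0) = _
              rw [if_pos ⟨hm, hfresh⟩]
            have hGc : (PP Λ p).Gc (ℓ+1) m = 0 := by
              show (if m < (SSet Λ (ℓ+1)).card ∧ tL (decd Λ (ℓ+1) m) = ℓ+1 then (0:ℝ) else 1) = 0
              rw [if_pos ⟨hm, hfresh⟩]
            rw [hGc, add_zero, PP_pw_pos Λ p ℓ h1]
            rw [Finset.sum_congr rfl (fun j _ => by rw [hGj j])]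
            exact cref_sum Λ x (ℓ+1) (by omega) (h2F α) hm2 _ IH1
          rw [hFV, hGV, ← mono_add, h1F_add_h2F]
        · have hrelay : tL α + 1 = ℓ + 1 := by tauto
          have hmr : α ∈ SSet Λ ℓ := by
            rw [SSet, mem_filter]
            exact ⟨hαΛ, hdne, Or.inl (by omega)⟩
          have hFV : (PP Λ p).FV x (ℓ+1) m = mono x α := by
            show (∑ j ∈ range ((PP Λ p).pw ℓ), (PP Λ p).F (ℓ+1) m j * (PP Λ p).val x ℓ j)
                + (PP Λ p).Fc (ℓ+1) m = _
            rw [hFc0 m hm, add_zero, PP_pw_pos Λ p ℓ h1]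
            have hFj : ∀ j, (PP Λ p).F (ℓ+1) m j = cref Λ (ℓ+1) α j := by
              intro j
              show (if m < (SSet Λ (ℓ+1)).card then
                  (if tL (decd Λ (ℓ+1) m) = ℓ+1 then cref Λ (ℓ+1) (h1F (decd Λ (ℓ+1) m)) j
                    else cref Λ (ℓ+1) (decd Λ (ℓ+1) m) j)
                else if m = (SSet Λ (ℓ+1)).card then accF Λ p (ℓ+1) j else 0) = _
              rw [if_pos hm, if_neg hfresh]
            rw [Finset.sum_congr rfl (fun j _ => by rw [hFj j])]
            exact cref_sum Λ x (ℓ+1) (by omega) α hmr _ IH1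
          rw [hGV1 m (by intro hcon; exact hfresh hcon.2), hFV, mul_one]
      · -- accumulator at layer ℓ+1 ≥ 2
        rw [(PP Λ p).val_succ x (ℓ+1) _ (by omega)]
        have hmne : ¬ ((SSet Λ (ℓ+1)).card < (SSet Λ (ℓ+1)).card
            ∧ tL (decd Λ (ℓ+1) (SSet Λ (ℓ+1)).card) = ℓ+1) := by
          intro hcon; omega
        rw [hGV1 _ hmne, mul_one]
        show (∑ j ∈ range ((PP Λ p).pw ℓ),
            (PP Λ p).F (ℓ+1) (SSet Λ (ℓ+1)).card j * (PP Λ p).val x ℓ j)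
            + (PP Λ p).Fc (ℓ+1) (SSet Λ (ℓ+1)).card = _
        have hFcv : (PP Λ p).Fc (ℓ+1) (SSet Λ (ℓ+1)).card = 0 := by
          show (if (SSet Λ (ℓ+1)).card = (SSet Λ (ℓ+1)).card ∧ ℓ + 1 = 1 then p.coeff 0 else 0) = 0
          rw [if_neg (by omega)]
        rw [hFcv, add_zero, PP_pw_pos Λ p ℓ h1]
        have hFj : ∀ j, (PP Λ p).F (ℓ+1) (SSet Λ (ℓ+1)).card j = accF Λ p (ℓ+1) j := by
          intro j
          show (if (SSet Λ (ℓ+1)).card < (SSet Λ (ℓ+1)).card then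
              (if tL (decd Λ (ℓ+1) (SSet Λ (ℓ+1)).card) = ℓ+1
                then cref Λ (ℓ+1) (h1F (decd Λ (ℓ+1) (SSet Λ (ℓ+1)).card)) j
                else cref Λ (ℓ+1) (decd Λ (ℓ+1) (SSet Λ (ℓ+1)).card) j)
            else if (SSet Λ (ℓ+1)).card = (SSet Λ (ℓ+1)).card then accF Λ p (ℓ+1) j else 0) = _
          rw [if_neg (by omega), if_pos rfl]
        rw [Finset.sum_congr rfl (fun j _ => by rw [hFj j])]
        have haccj : ∀ j, accF Λ p (ℓ+1) j = (if j = (SSet Λ ℓ).card then (1:ℝ) else 0)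
            + (if h : j < (SSet Λ ℓ).card then
                (if tL (decd Λ ℓ j) + 1 = ℓ+1 then p.coeff (decd Λ ℓ j) else 0) else 0) := by
          intro j
          show (if ℓ + 1 = 1 then (fun j => ∑ α ∈ Λ.filter (fun α => deg α = 1),
                (p.coeff α) * cref Λ 1 α j)
              else (fun j => (if j = (SSet Λ (ℓ+1-1)).card then (1:ℝ) else 0)
                + (if h : j < (SSet Λ (ℓ+1-1)).card then
                    (if tL (decd Λ (ℓ+1-1) j) + 1 = ℓ+1 then p.coeff (decd Λ (ℓ+1-1) j) else 0)
                  else 0))) j = _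
          rw [if_neg (by omega : ¬ (ℓ + 1 = 1))]
          norm_num
        rw [Finset.sum_range_succ]
        have hlast : accF Λ p (ℓ+1) (SSet Λ ℓ).card * (PP Λ p).val x ℓ (SSet Λ ℓ).card
            = ACCp Λ p x ℓ := by
          rw [haccj, if_pos rfl, dif_neg (lt_irrefl _), IH2]
          ring
        have hmain : ∑ j ∈ range (SSet Λ ℓ).card, accF Λ p (ℓ+1) j * (PP Λ p).val x ℓ j
            = ∑ β ∈ (SSet Λ ℓ), (if tL β + 1 = ℓ+1 then p.coeff β else 0) * mono x β := by
          rw [← sum_decd Λ ℓ (fun β => (if tL β + 1 = ℓ+1 then p.coeff β else 0) * mono x β)]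
          refine Finset.sum_congr rfl (fun j hj => ?_)
          have hjlt := mem_range.mp hj
          rw [haccj, if_neg (by omega), dif_pos hjlt, IH1 j hjlt]
          ring
        rw [hlast, hmain]
        have hfil : ∑ β ∈ SSet Λ ℓ, (if tL β + 1 = ℓ+1 then p.coeff β else 0) * mono x β
            = ∑ β ∈ Λ.filter (fun β => deg β ≠ 0 ∧ tL β + 1 = ℓ+1), p.coeff β * mono x β := by
          have h1' : ∀ β ∈ SSet Λ ℓ, (if tL β + 1 = ℓ+1 then p.coeff β else 0) * mono x β
              = if tL β + 1 = ℓ+1 then p.coeff β * mono x β else 0 := by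
            intro β _; split_ifs <;> ring
          rw [Finset.sum_congr rfl h1', ← Finset.sum_filter]
          congr 1
          ext β
          simp only [SSet, mem_filter]
          constructor
          · rintro ⟨⟨hβ1, hβ2, _⟩, hβ4⟩
            exact ⟨hβ1, hβ2, hβ4⟩
          · rintro ⟨hβ1, hβ2, hβ3⟩
            exact ⟨⟨hβ1, hβ2, Or.inl (by omega)⟩, hβ3⟩
        rw [hfil]
        have hunion : Λ.filter (fun α => deg α = 0 ∨ tL α < ℓ+1)
            = Λ.filter (fun α => deg α = 0 ∨ tL α < ℓ)
              ∪ Λ.filter (fun α => deg α ≠ 0 ∧ tL α + 1 = ℓ+1) := by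
          ext β
          simp only [mem_filter, mem_union]
          constructor
          · rintro ⟨hΛ, hc⟩
            by_cases hd : deg β = 0
            · exact Or.inl ⟨hΛ, Or.inl hd⟩
            · rcases hc with hc | hc
              · exact absurd hc hd
              · rcases Nat.lt_or_ge (tL β) ℓ with hlt | hge
                · exact Or.inl ⟨hΛ, Or.inr hlt⟩
                · exact Or.inr ⟨hΛ, hd, by omega⟩
          · rintro (⟨hΛ, hc⟩ | ⟨hΛ, h2, h3⟩)
            · rcases hc with hc | hc
              · exact ⟨hΛ, Or.inl hc⟩
              · exact ⟨hΛ, Or.inr (by omega)⟩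
            · exact ⟨hΛ, Or.inr (by omega)⟩
        have hdisj : Disjoint (Λ.filter (fun α => deg α = 0 ∨ tL α < ℓ))
            (Λ.filter (fun α => deg α ≠ 0 ∧ tL α + 1 = ℓ+1)) := by
          rw [Finset.disjoint_left]
          intro β hb1 hb2
          rw [mem_filter] at hb1 hb2
          obtain ⟨_, hc⟩ := hb1
          obtain ⟨_, hd, he⟩ := hb2
          rcases hc with hc | hc
          · exact hd hc
          · omega
        unfold ACCp
        rw [hunion, Finset.sum_union hdisj]
        unfold ACCp at IH2
        ring

lemma res_correct (hdc : ∀ α ∈ Λ, ∀ β : Fin d →₀ ℕ, β ≤ α → β ∈ Λ) (hsupp : p.support ⊆ Λ)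
    (x : ℕ → ℝ) :
    (PP Λ p).res x = MvPolynomial.eval (fun i : Fin d => x (i : ℕ)) p := by
  have hT1 : 1 ≤ TT Λ := le_max_left 1 _
  obtain ⟨IH1, IH2⟩ := val_correct Λ p hdc hsupp x (TT Λ) hT1
  show (∑ j ∈ range ((PP Λ p).w ((PP Λ p).depth)), (PP Λ p).out j
      * (PP Λ p).val x ((PP Λ p).depth) j) + (PP Λ p).outc = _
  have hdepth : (PP Λ p).depth = TT Λ := rfl
  have hwv : (PP Λ p).w (TT Λ) = (SSet Λ (TT Λ)).card + 1 := rfl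
  have houtc : (PP Λ p).outc = 0 := rfl
  rw [hdepth, hwv, houtc, add_zero, Finset.sum_range_succ]
  have hout_last : (PP Λ p).out (SSet Λ (TT Λ)).card = 1 := by
    show (if (SSet Λ (TT Λ)).card = (SSet Λ (TT Λ)).card then (1:ℝ) else _) = 1
    rw [if_pos rfl]
  have hout_j : ∀ j, j < (SSet Λ (TT Λ)).card → (PP Λ p).out j
      = (if tL (decd Λ (TT Λ) j) = TT Λ then p.coeff (decd Λ (TT Λ) j) else 0) := by
    intro j hj
    show (if j = (SSet Λ (TT Λ)).card then (1:ℝ)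
        else if h : j < (SSet Λ (TT Λ)).card then
          (if tL (decd Λ (TT Λ) j) = TT Λ then p.coeff (decd Λ (TT Λ) j) else 0) else 0) = _
    rw [if_neg (by omega), dif_pos hj]
  have hmain : ∑ j ∈ range (SSet Λ (TT Λ)).card, (PP Λ p).out j * (PP Λ p).val x (TT Λ) j
      = ∑ β ∈ SSet Λ (TT Λ), (if tL β = TT Λ then p.coeff β else 0) * mono x β := by
    rw [← sum_decd Λ (TT Λ) (fun β => (if tL β = TT Λ then p.coeff β else 0) * mono x β)]
    refine Finset.sum_congr rfl (fun j hj => ?_)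
    have hjlt := mem_range.mp hj
    rw [hout_j j hjlt, IH1 j hjlt]
  rw [hmain, hout_last, one_mul, IH2]
  have hfil : ∑ β ∈ SSet Λ (TT Λ), (if tL β = TT Λ then p.coeff β else 0) * mono x β
      = ∑ β ∈ Λ.filter (fun β => deg β ≠ 0 ∧ tL β = TT Λ), p.coeff β * mono x β := by
    have h1' : ∀ β ∈ SSet Λ (TT Λ), (if tL β = TT Λ then p.coeff β else 0) * mono x β
        = if tL β = TT Λ then p.coeff β * mono x β else 0 := by
      intro β _; split_ifs <;> ring
    rw [Finset.sum_congr rfl h1', ← Finset.sum_filter]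
    congr 1
    ext β
    simp only [SSet, mem_filter]
    constructor
    · rintro ⟨⟨hβ1, hβ2, _⟩, hβ4⟩
      exact ⟨hβ1, hβ2, hβ4⟩
    · rintro ⟨hβ1, hβ2, hβ3⟩
      exact ⟨⟨hβ1, hβ2, Or.inl hβ3⟩, hβ3⟩
  rw [hfil]
  have hunion : Λ = Λ.filter (fun α => deg α = 0 ∨ tL α < TT Λ)
      ∪ Λ.filter (fun α => deg α ≠ 0 ∧ tL α = TT Λ) := by
    ext β
    simp only [mem_filter, mem_union]
    constructor
    · intro hβ
      have hle : tL β ≤ TT Λ := le_trans (Finset.le_sup hβ) (le_max_right 1 _)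
      by_cases hd : deg β = 0
      · exact Or.inl ⟨hβ, Or.inl hd⟩
      · rcases Nat.lt_or_ge (tL β) (TT Λ) with hlt | hge
        · exact Or.inl ⟨hβ, Or.inr hlt⟩
        · exact Or.inr ⟨hβ, hd, by omega⟩
    · rintro (⟨hβ, _⟩ | ⟨hβ, _, _⟩) <;> exact hβ
  have hdisj : Disjoint (Λ.filter (fun α => deg α = 0 ∨ tL α < TT Λ))
      (Λ.filter (fun α => deg α ≠ 0 ∧ tL α = TT Λ)) := by
    rw [Finset.disjoint_left]
    intro β hb1 hb2
    rw [mem_filter] at hb1 hb2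
    obtain ⟨_, hc⟩ := hb1
    obtain ⟨_, hd, he⟩ := hb2
    rcases hc with hc | hc
    · exact hd hc
    · omega
  have heval : MvPolynomial.eval (fun i : Fin d => x (i : ℕ)) p
      = ∑ α ∈ Λ, p.coeff α * mono x α := by
    rw [MvPolynomial.eval_eq]
    rw [Finset.sum_subset hsupp (fun α _ hns => by
      rw [MvPolynomial.notMem_support_iff.mp hns, zero_mul])]
    refine Finset.sum_congr rfl (fun α _ => ?_)
    congr 1
    unfold mono
    refine Finset.prod_subset (Finset.subset_univ _) (fun i _ hni => ?_)
    rw [Finsupp.notMem_support_iff.mp hni, pow_zero]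
  have hs2 : ∑ α ∈ Λ, p.coeff α * mono x α
      = (∑ α ∈ Λ.filter (fun α => deg α = 0 ∨ tL α < TT Λ), p.coeff α * mono x α)
        + ∑ α ∈ Λ.filter (fun α => deg α ≠ 0 ∧ tL α = TT Λ), p.coeff α * mono x α := by
    conv_lhs => rw [hunion]
    exact Finset.sum_union hdisj
  rw [heval, hs2]
  unfold ACCp
  ring

lemma sum_fiber_le (f : (Fin d →₀ ℕ) → ℕ) (K : Finset ℕ) :
    ∑ k ∈ K, (Λ.filter (fun α => f α = k)).card ≤ Λ.card := by
  have hmem : ∀ α ∈ Λ.filter (fun α => f α ∈ K), f α ∈ K := fun α hα => (mem_filter.mp hα).2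
  have h := Finset.card_eq_sum_card_fiberwise hmem
  have h2 : ∀ k ∈ K, ((Λ.filter (fun α => f α ∈ K)).filter (fun α => f α = k))
      = Λ.filter (fun α => f α = k) := by
    intro k hk
    rw [Finset.filter_filter]
    apply Finset.filter_congr
    intro α _
    constructor
    · exact fun h => h.2
    · exact fun h => ⟨h ▸ hk, h⟩
  calc ∑ k ∈ K, (Λ.filter (fun α => f α = k)).card
      = ∑ k ∈ K, ((Λ.filter (fun α => f α ∈ K)).filter (fun α => f α = k)).card :=
        (Finset.sum_congr rfl (fun k hk => by rw [h2 k hk])).symm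
    _ = (Λ.filter (fun α => f α ∈ K)).card := h.symm
    _ ≤ Λ.card := Finset.card_filter_le _ _

lemma SC_le : ∑ ℓ ∈ Icc 1 (TT Λ), (SSet Λ ℓ).card ≤ 2 * Λ.card := by
  have hsub : ∀ ℓ : ℕ, (SSet Λ ℓ).card
      ≤ (Λ.filter (fun α => tL α = ℓ)).card + (Λ.filter (fun α => tL α + 1 = ℓ)).card := by
    intro ℓ
    have hss : SSet Λ ℓ ⊆ Λ.filter (fun α => tL α = ℓ) ∪ Λ.filter (fun α => tL α + 1 = ℓ) := by
      intro α hα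
      rw [SSet, mem_filter] at hα
      rw [mem_union, mem_filter, mem_filter]
      tauto
    calc (SSet Λ ℓ).card ≤ _ := Finset.card_le_card hss
      _ ≤ _ := Finset.card_union_le _ _
  calc ∑ ℓ ∈ Icc 1 (TT Λ), (SSet Λ ℓ).card
      ≤ ∑ ℓ ∈ Icc 1 (TT Λ), ((Λ.filter (fun α => tL α = ℓ)).card
          + (Λ.filter (fun α => tL α + 1 = ℓ)).card) :=
        Finset.sum_le_sum (fun ℓ _ => hsub ℓ)
    _ = (∑ ℓ ∈ Icc 1 (TT Λ), (Λ.filter (fun α => tL α = ℓ)).card)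
        + ∑ ℓ ∈ Icc 1 (TT Λ), (Λ.filter (fun α => tL α + 1 = ℓ)).card :=
        Finset.sum_add_distrib
    _ ≤ Λ.card + Λ.card :=
        Nat.add_le_add (sum_fiber_le Λ tL _) (sum_fiber_le Λ (fun α => tL α + 1) _)
    _ = 2 * Λ.card := by ring

lemma deg_lt_card (hdc : ∀ α ∈ Λ, ∀ β : Fin d →₀ ℕ, β ≤ α → β ∈ Λ) :
    ∀ α ∈ Λ, deg α < Λ.card := by
  intro α hα
  have hmaps : ∀ j ∈ range (deg α + 1), takeF α j ∈ Λ :=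
    fun j _ => hdc α hα _ (takeF_le α j)
  have hinj : Set.InjOn (fun j => takeF α j) ↑(range (deg α + 1)) := by
    intro a ha b hb hab
    have ha' := mem_range.mp (Finset.mem_coe.mp ha)
    have hb' := mem_range.mp (Finset.mem_coe.mp hb)
    have hda : deg (takeF α a) = a := deg_takeF α a (by omega)
    have hdb : deg (takeF α b) = b := deg_takeF α b (by omega)
    have hab' : takeF α a = takeF α b := hab
    rw [← hda, ← hdb, hab']
  have := Finset.card_le_card_of_injOn _ hmaps hinj
  rw [card_range] at this
  omega

lemma TT_le_card (hne : Λ.Nonempty) (hdc : ∀ α ∈ Λ, ∀ β : Fin d →₀ ℕ, β ≤ α → β ∈ Λ) :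
    TT Λ ≤ Λ.card := by
  apply max_le
  · exact Finset.Nonempty.card_pos hne
  · apply Finset.sup_le
    intro α hα
    have h1 : tL α ≤ deg α := clog2_le_self (deg α)
    have h2 := deg_lt_card Λ hdc α hα
    omega

lemma TT_le_depth (hd : 1 ≤ d) :
    TT Λ ≤ (∑ i : Fin d, Nat.log 2 (Λ.sup (fun α => α i))) + d := by
  apply max_le
  · omega
  · apply Finset.sup_le
    intro α hα
    have hdeg : deg α ≤ ∑ i : Fin d, Λ.sup (fun α => α i) :=
      Finset.sum_le_sum (fun i _ => Finset.le_sup (f := fun α => α i) hα)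
    calc tL α ≤ Nat.clog 2 (∑ i : Fin d, Λ.sup (fun α => α i)) := Nat.clog_mono_right 2 hdeg
      _ ≤ (∑ i : Fin d, Nat.log 2 (Λ.sup (fun α => α i))) + (univ : Finset (Fin d)).card :=
          clog2_sum_le univ _
      _ = (∑ i : Fin d, Nat.log 2 (Λ.sup (fun α => α i))) + d := by
          rw [Finset.card_univ, Fintype.card_fin]


lemma card_filter_product (P : ℕ × ℕ → Prop) [DecidablePred P] (s t : Finset ℕ) :
    ((s ×ˢ t).filter P).card ≤ ∑ a ∈ s, (t.filter (fun b => P (a, b))).card := by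
  classical
  have hmem : ∀ q ∈ (s ×ˢ t).filter P, q.1 ∈ s :=
    fun q hq => (mem_product.mp (mem_filter.mp hq).1).1
  rw [Finset.card_eq_sum_card_fiberwise hmem]
  refine Finset.sum_le_sum (fun a _ => ?_)
  apply Finset.card_le_card_of_injOn (fun q => q.2)
  · intro q hq
    simp only [Finset.mem_coe] at hq ⊢
    rw [mem_filter] at hq
    obtain ⟨hq1, hq2⟩ := hq
    rw [mem_filter] at hq1
    obtain ⟨hq3, hq4⟩ := hq1
    rw [mem_filter]
    refine ⟨(mem_product.mp hq3).2, ?_⟩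
    have : q = (a, q.2) := by
      rw [← hq2]
    rw [← this]
    exact hq4
  · intro q hq q' hq' hqq
    simp only [Finset.mem_coe, mem_filter] at hq hq'
    have h1 : q.1 = a := hq.2
    have h2 : q'.1 = a := hq'.2
    exact Prod.ext (h1.trans h2.symm) hqq

lemma cref_row_le (ℓ : ℕ) (β : Fin d →₀ ℕ) (n : ℕ) (hβ : 2 ≤ ℓ ∨ deg β = 1) :
    ((range n).filter (fun j => cref Λ ℓ β j ≠ 0)).card ≤ 1 := by
  by_cases hl : ℓ = 1
  · have hd1 : deg β = 1 := by rcases hβ with h | h; omega; exact h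
    obtain ⟨i, rfl⟩ := deg_one_single β hd1
    subst hl
    have hsub : (range n).filter (fun j => cref Λ 1 (Finsupp.single i 1) j ≠ 0) ⊆ {(i : ℕ)} := by
      intro j hj
      rw [mem_filter] at hj
      rw [mem_singleton]
      have hc : cref Λ 1 (Finsupp.single i 1) j ≠ 0 := hj.2
      have hcv : cref Λ 1 (Finsupp.single i 1) j
          = if h : j < d then (((Finsupp.single i 1 : Fin d →₀ ℕ) ⟨j, h⟩ : ℕ) : ℝ) else 0 := by
        rw [cref, if_pos rfl]
      rw [hcv] at hc
      by_cases hjd : j < d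
      · rw [dif_pos hjd] at hc
        by_contra hne
        have : (⟨j, hjd⟩ : Fin d) ≠ i := by
          intro hcon
          apply hne
          rw [← hcon]
        rw [Finsupp.single_eq_of_ne' (Ne.symm this)] at hc
        exact hc (by norm_num)
      · rw [dif_neg hjd] at hc
        exact absurd rfl hc
    calc _ ≤ ({(i:ℕ)} : Finset ℕ).card := Finset.card_le_card hsub
      _ = 1 := Finset.card_singleton _
  · have hsub : (range n).filter (fun j => cref Λ ℓ β j ≠ 0) ⊆ {pos Λ (ℓ-1) β} := by
      intro j hj
      rw [mem_filter] at hj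
      rw [mem_singleton]
      have hc := hj.2
      have hcv : cref Λ ℓ β j = if j = pos Λ (ℓ-1) β then (1:ℝ) else 0 := by
        rw [cref, if_neg hl]
      rw [hcv] at hc
      by_contra hne
      rw [if_neg hne] at hc
      exact hc rfl
    calc _ ≤ ({pos Λ (ℓ-1) β} : Finset ℕ).card := Finset.card_le_card hsub
      _ = 1 := Finset.card_singleton _

lemma row_le (ℓ : ℕ) (hℓ : 1 ≤ ℓ) (n : ℕ) (m : ℕ) (hm : m < (SSet Λ ℓ).card) :
    ((range n).filter (fun j => (PP Λ p).F ℓ m j ≠ 0 ∨ (PP Λ p).G ℓ m j ≠ 0)).card ≤ 2 := by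
  set α := decd Λ ℓ m with hα
  have hmem := decd_mem Λ hm
  rw [SSet, mem_filter] at hmem
  obtain ⟨hαΛ, hdne, hcond⟩ := hmem
  have hsub : (range n).filter (fun j => (PP Λ p).F ℓ m j ≠ 0 ∨ (PP Λ p).G ℓ m j ≠ 0)
      ⊆ ((range n).filter (fun j => (PP Λ p).F ℓ m j ≠ 0))
        ∪ ((range n).filter (fun j => (PP Λ p).G ℓ m j ≠ 0)) := by
    intro j hj
    rw [mem_filter] at hj
    rw [mem_union, mem_filter, mem_filter]
    tauto
  have hFle : ((range n).filter (fun j => (PP Λ p).F ℓ m j ≠ 0)).card ≤ 1 := by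
    by_cases hfresh : tL α = ℓ
    · have hFj : ∀ j, (PP Λ p).F ℓ m j = cref Λ ℓ (h1F α) j := by
        intro j
        show (if m < (SSet Λ ℓ).card then
            (if tL (decd Λ ℓ m) = ℓ then cref Λ ℓ (h1F (decd Λ ℓ m)) j
              else cref Λ ℓ (decd Λ ℓ m) j)
          else if m = (SSet Λ ℓ).card then accF Λ p ℓ j else 0) = _
        rw [if_pos hm, if_pos hfresh]
      rw [Finset.filter_congr (fun j _ => by rw [hFj j])]
      apply cref_row_le
      rcases Nat.lt_or_ge ℓ 2 with h2 | h2
      · have hl1 : ℓ = 1 := by omega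
        right
        have : deg α = 2 := tL_eq_one_deg α (by omega)
        rw [deg_h1F α (by omega), this]
      · exact Or.inl h2
    · have hFj : ∀ j, (PP Λ p).F ℓ m j = cref Λ ℓ α j := by
        intro j
        show (if m < (SSet Λ ℓ).card then
            (if tL (decd Λ ℓ m) = ℓ then cref Λ ℓ (h1F (decd Λ ℓ m)) j
              else cref Λ ℓ (decd Λ ℓ m) j)
          else if m = (SSet Λ ℓ).card then accF Λ p ℓ j else 0) = _
        rw [if_pos hm, if_neg hfresh]
      rw [Finset.filter_congr (fun j _ => by rw [hFj j])]
      apply cref_row_le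
      have hrel : tL α + 1 = ℓ := by
        rcases hcond with h | h
        · exact absurd h hfresh
        · exact h
      rcases Nat.lt_or_ge ℓ 2 with h2 | h2
      · right
        exact deg_one_of_tL_zero α (by omega) hdne
      · exact Or.inl h2
  have hGle : ((range n).filter (fun j => (PP Λ p).G ℓ m j ≠ 0)).card ≤ 1 := by
    by_cases hfresh : tL α = ℓ
    · have hGj : ∀ j, (PP Λ p).G ℓ m j = cref Λ ℓ (h2F α) j := by
        intro j
        show (if m < (SSet Λ ℓ).card ∧ tL (decd Λ ℓ m) = ℓ
            then cref Λ ℓ (h2F (decd Λ ℓ m)) j else 0) = _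
        rw [if_pos ⟨hm, hfresh⟩]
      rw [Finset.filter_congr (fun j _ => by rw [hGj j])]
      apply cref_row_le
      rcases Nat.lt_or_ge ℓ 2 with h2 | h2
      · right
        have : deg α = 2 := tL_eq_one_deg α (by omega)
        rw [deg_h2F α (by omega), this]
      · exact Or.inl h2
    · have hGj : ∀ j, (PP Λ p).G ℓ m j = 0 := by
        intro j
        show (if m < (SSet Λ ℓ).card ∧ tL (decd Λ ℓ m) = ℓ
            then cref Λ ℓ (h2F (decd Λ ℓ m)) j else 0) = _
        rw [if_neg (by tauto)]
      rw [Finset.filter_congr (fun j _ => by rw [hGj j])]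
      simp
  calc _ ≤ _ := Finset.card_le_card hsub
    _ ≤ _ := Finset.card_union_le _ _
    _ ≤ 2 := by omega

lemma acc_row_one_le :
    ((range d).filter (fun j => accF Λ p 1 j ≠ 0)).card ≤ Λ.card := by
  apply Finset.card_le_card_of_injOn
    (fun j => if h : j < d then Finsupp.single (⟨j, h⟩ : Fin d) 1 else 0)
  · intro j hj
    rw [Finset.mem_coe, mem_filter, mem_range] at hj
    obtain ⟨hjd, hne⟩ := hj
    dsimp only
    rw [dif_pos hjd]
    have hacc : accF Λ p 1 j
        = ∑ α ∈ Λ.filter (fun α => deg α = 1), p.coeff α * cref Λ 1 α j := by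
      show (if (1:ℕ) = 1 then (fun j => ∑ α ∈ Λ.filter (fun α => deg α = 1),
          (p.coeff α) * cref Λ 1 α j) else _) j = _
      rw [if_pos rfl]
    rw [hacc] at hne
    obtain ⟨α, hαmem, hαne⟩ := Finset.exists_ne_zero_of_sum_ne_zero hne
    have hd1 : deg α = 1 := (mem_filter.mp hαmem).2
    have hcne : cref Λ 1 α j ≠ 0 := by
      intro h
      apply hαne
      rw [h, mul_zero]
    obtain ⟨i, rfl⟩ := deg_one_single α hd1
    have hcv : cref Λ 1 (Finsupp.single i 1) j
        = if h : j < d then (((Finsupp.single i 1 : Fin d →₀ ℕ) ⟨j, h⟩ : ℕ) : ℝ) else 0 := by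
      rw [cref, if_pos rfl]
    rw [hcv, dif_pos hjd] at hcne
    have hij : (⟨j, hjd⟩ : Fin d) = i := by
      by_contra hne2
      rw [Finsupp.single_eq_of_ne' (Ne.symm hne2)] at hcne
      exact hcne (by norm_num)
    rw [hij]
    exact (mem_filter.mp hαmem).1
  · intro a ha b hb hab
    rw [Finset.mem_coe, mem_filter, mem_range] at ha hb
    simp only at hab
    rw [dif_pos ha.1, dif_pos hb.1] at hab
    have h2 := Finsupp.single_left_injective (α := Fin d) (M := ℕ) one_ne_zero hab
    exact congrArg Fin.val h2

lemma cF_le_one : (PP Λ p).cF 1 ≤ 2 * (SSet Λ 1).card + (Λ.card + 1) := by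
  unfold PNet.cF
  have hw1 : (PP Λ p).w 1 = (SSet Λ 1).card + 1 := rfl
  have hpw0 : (PP Λ p).pw (1-1) = d := rfl
  rw [hw1, hpw0]
  refine le_trans (card_filter_product _ _ _) ?_
  rw [Finset.sum_range_succ]
  have hrow : ∀ m ∈ range (SSet Λ 1).card,
      ((range d).filter (fun j => (PP Λ p).F 1 m j ≠ 0 ∨ (PP Λ p).G 1 m j ≠ 0)).card ≤ 2 :=
    fun m hm => row_le Λ p 1 le_rfl d m (mem_range.mp hm)
  have hacc : ((range d).filter (fun j => (PP Λ p).F 1 (SSet Λ 1).card j ≠ 0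
      ∨ (PP Λ p).G 1 (SSet Λ 1).card j ≠ 0)).card ≤ Λ.card := by
    have hsub : (range d).filter (fun j => (PP Λ p).F 1 (SSet Λ 1).card j ≠ 0
        ∨ (PP Λ p).G 1 (SSet Λ 1).card j ≠ 0) ⊆ (range d).filter (fun j => accF Λ p 1 j ≠ 0) := by
      intro j hj
      rw [mem_filter] at hj ⊢
      refine ⟨hj.1, ?_⟩
      rcases hj.2 with hF | hG
      · have : (PP Λ p).F 1 (SSet Λ 1).card j = accF Λ p 1 j := by
          show (if (SSet Λ 1).card < (SSet Λ 1).card then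
              (if tL (decd Λ 1 (SSet Λ 1).card) = 1 then cref Λ 1 (h1F (decd Λ 1 (SSet Λ 1).card)) j
                else cref Λ 1 (decd Λ 1 (SSet Λ 1).card) j)
            else if (SSet Λ 1).card = (SSet Λ 1).card then accF Λ p 1 j else 0) = _
          rw [if_neg (by omega), if_pos rfl]
        rw [← this]
        exact hF
      · exfalso
        apply hG
        show (if (SSet Λ 1).card < (SSet Λ 1).card ∧ tL (decd Λ 1 (SSet Λ 1).card) = 1
            then cref Λ 1 (h2F (decd Λ 1 (SSet Λ 1).card)) j else 0) = 0
        rw [if_neg (by omega)]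
    exact le_trans (Finset.card_le_card hsub) (acc_row_one_le Λ p)
  calc (∑ m ∈ range (SSet Λ 1).card, ((range d).filter
        (fun j => (PP Λ p).F 1 m j ≠ 0 ∨ (PP Λ p).G 1 m j ≠ 0)).card)
      + ((range d).filter (fun j => (PP Λ p).F 1 (SSet Λ 1).card j ≠ 0
          ∨ (PP Λ p).G 1 (SSet Λ 1).card j ≠ 0)).card
      ≤ (∑ _m ∈ range (SSet Λ 1).card, 2) + Λ.card :=
        Nat.add_le_add (Finset.sum_le_sum hrow) hacc
    _ = 2 * (SSet Λ 1).card + Λ.card := by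
        rw [Finset.sum_const, card_range, smul_eq_mul]
        ring_nf
    _ ≤ 2 * (SSet Λ 1).card + (Λ.card + 1) := by omega

lemma cF_le_ge2 (ℓ : ℕ) (h2 : 2 ≤ ℓ) :
    (PP Λ p).cF ℓ ≤ 2 * (SSet Λ ℓ).card + ((SSet Λ (ℓ-1)).card + 2) := by
  unfold PNet.cF
  have hw : (PP Λ p).w ℓ = (SSet Λ ℓ).card + 1 := rfl
  have hpw : (PP Λ p).pw (ℓ-1) = (SSet Λ (ℓ-1)).card + 1 := PP_pw_pos Λ p (ℓ-1) (by omega)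
  rw [hw, hpw]
  refine le_trans (card_filter_product _ _ _) ?_
  rw [Finset.sum_range_succ]
  have hrow : ∀ m ∈ range (SSet Λ ℓ).card,
      ((range ((SSet Λ (ℓ-1)).card + 1)).filter
        (fun j => (PP Λ p).F ℓ m j ≠ 0 ∨ (PP Λ p).G ℓ m j ≠ 0)).card ≤ 2 :=
    fun m hm => row_le Λ p ℓ (by omega) _ m (mem_range.mp hm)
  have hacc : ((range ((SSet Λ (ℓ-1)).card + 1)).filter
      (fun j => (PP Λ p).F ℓ (SSet Λ ℓ).card j ≠ 0 ∨ (PP Λ p).G ℓ (SSet Λ ℓ).card j ≠ 0)).card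
      ≤ (SSet Λ (ℓ-1)).card + 1 := by
    calc _ ≤ (range ((SSet Λ (ℓ-1)).card + 1)).card := Finset.card_filter_le _ _
      _ = (SSet Λ (ℓ-1)).card + 1 := card_range _
  calc _ ≤ (∑ _m ∈ range (SSet Λ ℓ).card, 2) + ((SSet Λ (ℓ-1)).card + 1) :=
        Nat.add_le_add (Finset.sum_le_sum hrow) hacc
    _ = 2 * (SSet Λ ℓ).card + ((SSet Λ (ℓ-1)).card + 1) := by
        rw [Finset.sum_const, card_range, smul_eq_mul]
        ring_nf
    _ ≤ _ := by omega


lemma neurons_PP : (PP Λ p).toNet.neurons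
    = 4 * (∑ ℓ ∈ Icc 1 (TT Λ), (SSet Λ ℓ).card) + 4 * TT Λ := by
  have hdep : 1 ≤ (PP Λ p).depth := le_max_left 1 _
  rw [PNet.neurons_toNet _ hdep]
  have hdd : (PP Λ p).depth = TT Λ := rfl
  rw [hdd]
  have hh : ∀ k ∈ Icc 1 (TT Λ), 4 * (PP Λ p).w k = 4 * (SSet Λ k).card + 4 := by
    intro k _
    show 4 * ((SSet Λ k).card + 1) = _
    ring
  rw [Finset.sum_congr rfl hh, Finset.sum_add_distrib, ← Finset.mul_sum, Finset.sum_const,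
    Nat.card_Icc, smul_eq_mul]
  omega

lemma sum_cF_le :
    ∑ ℓ ∈ Icc 1 (TT Λ), (PP Λ p).cF ℓ
      ≤ 3 * (∑ ℓ ∈ Icc 1 (TT Λ), (SSet Λ ℓ).card) + Λ.card + 2 * TT Λ + 1 := by
  have hTT : 1 ≤ TT Λ := le_max_left 1 _
  have hins : Icc 1 (TT Λ) = insert 1 (Icc 2 (TT Λ)) := by
    ext k
    rw [Finset.mem_insert, mem_Icc, mem_Icc]
    omega
  have hsplit : ∑ ℓ ∈ Icc 1 (TT Λ), (PP Λ p).cF ℓ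
      = (PP Λ p).cF 1 + ∑ ℓ ∈ Icc 2 (TT Λ), (PP Λ p).cF ℓ := by
    rw [hins, Finset.sum_insert (by rw [mem_Icc]; omega)]
  have hsplitS : ∑ ℓ ∈ Icc 1 (TT Λ), (SSet Λ ℓ).card
      = (SSet Λ 1).card + ∑ ℓ ∈ Icc 2 (TT Λ), (SSet Λ ℓ).card := by
    rw [hins, Finset.sum_insert (by rw [mem_Icc]; omega)]
  have h1 := cF_le_one Λ p
  have h2 : ∑ ℓ ∈ Icc 2 (TT Λ), (PP Λ p).cF ℓ
      ≤ ∑ ℓ ∈ Icc 2 (TT Λ), (2 * (SSet Λ ℓ).card + ((SSet Λ (ℓ-1)).card + 2)) :=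
    Finset.sum_le_sum (fun ℓ hℓ => cF_le_ge2 Λ p ℓ (mem_Icc.mp hℓ).1)
  have h3 : ∑ ℓ ∈ Icc 2 (TT Λ), (2 * (SSet Λ ℓ).card + ((SSet Λ (ℓ-1)).card + 2))
      = 2 * (∑ ℓ ∈ Icc 2 (TT Λ), (SSet Λ ℓ).card)
        + ((∑ ℓ ∈ Icc 2 (TT Λ), (SSet Λ (ℓ-1)).card) + 2 * (Icc 2 (TT Λ)).card) := by
    rw [Finset.sum_add_distrib, Finset.sum_add_distrib, ← Finset.mul_sum, Finset.sum_const,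
      smul_eq_mul]
    ring
  have h4 : ∑ ℓ ∈ Icc 2 (TT Λ), (SSet Λ ℓ).card ≤ ∑ ℓ ∈ Icc 1 (TT Λ), (SSet Λ ℓ).card := by
    apply Finset.sum_le_sum_of_subset
    intro k hk
    rw [mem_Icc] at hk
    rw [mem_Icc]
    omega
  have h5 : ∑ ℓ ∈ Icc 2 (TT Λ), (SSet Λ (ℓ-1)).card ≤ ∑ ℓ ∈ Icc 1 (TT Λ), (SSet Λ ℓ).card := by
    have heq : ∑ ℓ ∈ Icc 2 (TT Λ), (SSet Λ (ℓ-1)).card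
        = ∑ ℓ ∈ Icc 1 (TT Λ - 1), (SSet Λ ℓ).card := by
      refine Finset.sum_nbij' (fun ℓ => ℓ - 1) (fun ℓ => ℓ + 1) ?_ ?_ ?_ ?_ ?_
      · intro a ha; simp only [mem_Icc] at ha ⊢; omega
      · intro a ha; simp only [mem_Icc] at ha ⊢; omega
      · intro a ha; simp only [mem_Icc] at ha; omega
      · intro a ha; simp only [mem_Icc] at ha; omega
      · intro a _; rfl
    rw [heq]
    apply Finset.sum_le_sum_of_subset
    intro k hk
    rw [mem_Icc] at hk
    rw [mem_Icc]
    omega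
  have h6 : (Icc 2 (TT Λ)).card ≤ TT Λ := by rw [Nat.card_Icc]; omega
  omega

theorem main (hd : 1 ≤ d) (hne : Λ.Nonempty)
    (hdc : ∀ α ∈ Λ, ∀ β : Fin d →₀ ℕ, β ≤ α → β ∈ Λ) (hsupp : p.support ⊆ Λ) :
    ∃ Φ : Net,
      1 ≤ Φ.L ∧ Φ.width 0 = d ∧ Φ.width Φ.L = 1 ∧
      Φ.hiddenLayers ≤ (∑ i : Fin d, Nat.log 2 (Λ.sup (fun α => α i))) + d ∧
      Φ.neurons ≤ 200 * Λ.card ∧ Φ.nonzeroWeights ≤ 200 * Λ.card ∧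
      ∀ x : ℕ → ℝ, Φ.realize (repu 2) x 0
        = MvPolynomial.eval (fun i : Fin d => x i) p := by
  have hdep : 1 ≤ (PP Λ p).depth := le_max_left 1 _
  have hSC : ∑ ℓ ∈ Icc 1 (TT Λ), (SSet Λ ℓ).card ≤ 2 * Λ.card := SC_le Λ
  have hTT : TT Λ ≤ Λ.card := TT_le_card Λ hne hdc
  have hL1 : 1 ≤ Λ.card := hne.card_pos
  refine ⟨(PP Λ p).toNet, ?_, rfl, (PP Λ p).widthL_toNet, ?_, ?_, ?_, ?_⟩
  · show 1 ≤ (PP Λ p).depth + 1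
    omega
  · rw [(PP Λ p).hiddenLayers_toNet]
    exact TT_le_depth Λ hd
  · have hn := neurons_PP Λ p
    omega
  · have hw := (PP Λ p).weights_toNet hdep
    have hcf := sum_cF_le Λ p
    have hsum : ∑ k ∈ Icc 1 ((PP Λ p).depth), (16 * (PP Λ p).cF k + 4 * (PP Λ p).w k)
        = 16 * (∑ k ∈ Icc 1 (TT Λ), (PP Λ p).cF k)
          + (4 * (∑ ℓ ∈ Icc 1 (TT Λ), (SSet Λ ℓ).card) + 4 * TT Λ) := by
      have hdd : (PP Λ p).depth = TT Λ := rfl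
      rw [hdd, Finset.sum_add_distrib, ← Finset.mul_sum]
      congr 1
      have hh : ∀ k ∈ Icc 1 (TT Λ), 4 * (PP Λ p).w k = 4 * (SSet Λ k).card + 4 := by
        intro k _
        show 4 * ((SSet Λ k).card + 1) = _
        ring
      rw [Finset.sum_congr rfl hh, Finset.sum_add_distrib, ← Finset.mul_sum, Finset.sum_const,
        Nat.card_Icc, smul_eq_mul]
      omega
    have hwTT : (PP Λ p).w ((PP Λ p).depth) = (SSet Λ (TT Λ)).card + 1 := rfl
    have hcard : (SSet Λ (TT Λ)).card ≤ Λ.card := Finset.card_filter_le _ _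
    rw [hsum, hwTT] at hw
    omega
  · intro x
    rw [(PP Λ p).realize_toNet hdep x]
    exact res_correct Λ p hdc hsupp x

end Instance
end Stmt8


/-- any polynomial in a downward closed polynomial space `P_Λ` is realized by
a σ₂-network with at most `∑ᵢ ⌊log₂ Nᵢ⌋ + d` hidden layers and `O(|Λ|)` neurons and
nonzero weights, where `Nᵢ = max_{α ∈ Λ} αᵢ`. -/
theorem stmt_8 :
    ∃ C : ℕ, 0 < C ∧
      ∀ d : ℕ, 1 ≤ d →
        ∀ Λ : Finset (Fin d →₀ ℕ), Λ.Nonempty →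
          (∀ α ∈ Λ, ∀ β : Fin d →₀ ℕ, β ≤ α → β ∈ Λ) →
          ∀ p : MvPolynomial (Fin d) ℝ, p.support ⊆ Λ →
            ∃ Φ : Net,
              1 ≤ Φ.L ∧
              Φ.width 0 = d ∧
              Φ.width Φ.L = 1 ∧
              Φ.hiddenLayers ≤ (∑ i : Fin d, Nat.log 2 (Λ.sup (fun α => α i))) + d ∧
              Φ.neurons ≤ C * Λ.card ∧
              Φ.nonzeroWeights ≤ C * Λ.card ∧
              ∀ x : ℕ → ℝ, Φ.realize (repu 2) x 0 =
                MvPolynomial.eval (fun i : Fin d => x i) p := by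
  refine ⟨200, by norm_num, ?_⟩
  intro d hd Λ hne hdc p hsupp
  exact Stmt8.main Λ p hd hne hdc hsupp
end
end

section
/- Let s ≥ 2 and r ≥ 1 be integers and let k be an integer with 1 ≤ k ≤ s − 1. Then for all real x, T_{rs+k}(x) = 2 ∑_{i=1}^{r} δ⁻_{r−i} ( T_{is}(x)·T_k(x) − T_{(i−1)s}(x)·T_{s−k}(x) ) + δ⁺_r · T_{s−k}(x) + δ⁻_r · T_k(x). -/
open scoped Classical

noncomputable section

/-- `δ⁻_r = (1 + (-1)^r)/2`: equals 1 if `r` is even, 0 if `r` is odd. -/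
def deltaM (r : ℕ) : ℝ := (1 + (-1 : ℝ) ^ r) / 2

/-- `δ⁺_r = (1 - (-1)^r)/2`: equals 1 if `r` is odd, 0 if `r` is even. -/
def deltaP (r : ℕ) : ℝ := (1 - (-1 : ℝ) ^ r) / 2


lemma chebT_eq_poly (n : ℕ) (x : ℝ) : chebT n x = (Polynomial.Chebyshev.T ℝ n).eval x := by
  induction n using Nat.twoStepInduction with
  | zero => simp [chebT, Polynomial.Chebyshev.T_zero]
  | one => simp [chebT, Polynomial.Chebyshev.T_one]
  | more n ih1 ih2 =>
    have := Polynomial.Chebyshev.T_add_two ℝ n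
    rw [show chebT (n+2) x = 2 * x * chebT (n+1) x - chebT n x from rfl, ih1, ih2]
    push_cast
    rw [this]
    simp

lemma chebT_mul_chebT (a b : ℕ) (h : b ≤ a) (x : ℝ) :
    2 * chebT a x * chebT b x = chebT (a + b) x + chebT (a - b) x := by
  have := Polynomial.Chebyshev.T_mul_T ℝ (a : ℤ) (b : ℤ)
  have h2 : ((a : ℤ) - b) = ((a - b : ℕ) : ℤ) := by omega
  rw [chebT_eq_poly, chebT_eq_poly, chebT_eq_poly, chebT_eq_poly]
  have := congrArg (Polynomial.eval x) this
  simpa [h2, Polynomial.eval_add, Polynomial.eval_mul] using this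

lemma deltaM_zero : deltaM 0 = 1 := by norm_num [deltaM]
lemma deltaM_one : deltaM 1 = 0 := by norm_num [deltaM]
lemma deltaM_add_two (m : ℕ) : deltaM (m + 2) = deltaM m := by
  simp [deltaM, pow_succ]
lemma deltaP_add_two (m : ℕ) : deltaP (m + 2) = deltaP m := by
  simp [deltaP, pow_succ]

lemma stmt_10_aux (s : ℕ) (hs : 2 ≤ s) (k : ℕ) (hk1 : 1 ≤ k) (hk2 : k ≤ s - 1) (x : ℝ) :
    ∀ n : ℕ,
    chebT ((n + 1) * s + k) x =
      2 * ∑ i ∈ Finset.Icc 1 (n + 1),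
            deltaM ((n + 1) - i) * (chebT (i * s) x * chebT k x
              - chebT ((i - 1) * s) x * chebT (s - k) x)
        + deltaP (n + 1) * chebT (s - k) x + deltaM (n + 1) * chebT k x := by
  have hks : k ≤ s := by omega
  intro n
  induction n using Nat.twoStepInduction with
  | zero =>
    have hm := chebT_mul_chebT s k hks x
    have h0 : chebT 0 x = 1 := rfl
    simp only [Finset.Icc_self, Finset.sum_singleton]
    norm_num [deltaM, deltaP, h0]
    linarith
  | one =>
    have hm1 := chebT_mul_chebT (2 * s) k (by omega) x
    have hm2 := chebT_mul_chebT s (s - k) (by omega) x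
    rw [show s + (s - k) = 2 * s - k by omega, show s - (s - k) = k by omega] at hm2
    rw [show Finset.Icc 1 2 = {1, 2} by rfl]
    norm_num [deltaM, deltaP]
    nlinarith [hm1, hm2]
  | more n ih1 _ =>
    have hs3 : s ≤ (n + 3) * s := Nat.le_mul_of_pos_left s (by omega)
    have hs2 : s ≤ (n + 2) * s := Nat.le_mul_of_pos_left s (by omega)
    have hm1 := chebT_mul_chebT ((n + 3) * s) k (le_trans hks hs3) x
    have hm2 := chebT_mul_chebT ((n + 2) * s) (s - k) (le_trans (Nat.sub_le s k) hs2) x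
    have hsk2 : s - k ≤ (n + 2) * s := le_trans (Nat.sub_le s k) hs2
    have hk3 : k ≤ (n + 3) * s := le_trans hks hs3
    rw [show (n + 2) * s + (s - k) = (n + 3) * s - k by zify [hks, hk3]; ring,
        show (n + 2) * s - (s - k) = (n + 1) * s + k by zify [hks, hsk2]; ring] at hm2
    rw [Finset.sum_Icc_succ_top (show (1:ℕ) ≤ n + 3 by omega),
        Finset.sum_Icc_succ_top (show (1:ℕ) ≤ n + 2 by omega)]
    have hsum : ∑ i ∈ Finset.Icc 1 (n + 1),
            deltaM ((n + 3) - i) * (chebT (i * s) x * chebT k x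
              - chebT ((i - 1) * s) x * chebT (s - k) x)
        = ∑ i ∈ Finset.Icc 1 (n + 1),
            deltaM ((n + 1) - i) * (chebT (i * s) x * chebT k x
              - chebT ((i - 1) * s) x * chebT (s - k) x) := by
      refine Finset.sum_congr rfl fun i hi => ?_
      have hi' : i ≤ n + 1 := (Finset.mem_Icc.mp hi).2
      rw [show (n + 3) - i = ((n + 1) - i) + 2 by omega, deltaM_add_two]
    rw [hsum]
    rw [show (n + 3) - (n + 2) = 1 by omega, show (n + 3) - (n + 3) = 0 by omega,
        show (n + 2) - 1 = n + 1 by omega, show (n + 3) - 1 = n + 2 by omega,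
        deltaM_zero, deltaM_one,
        show (n + 3) = (n + 1) + 2 by omega, deltaM_add_two, deltaP_add_two]
    rw [show ((n + 1) + 2) * s + k = (n + 3) * s + k by ring] at *
    linarith [ih1]

/-- expansion of `T_{rs+k}` (Lemma on Chebyshev expansion). -/
theorem stmt_10 (s : ℕ) (hs : 2 ≤ s) (r : ℕ) (hr : 1 ≤ r) (k : ℕ)
    (hk1 : 1 ≤ k) (hk2 : k ≤ s - 1) (x : ℝ) :
    chebT (r * s + k) x =
      2 * ∑ i ∈ Finset.Icc 1 r,
            deltaM (r - i) * (chebT (i * s) x * chebT k x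
              - chebT ((i - 1) * s) x * chebT (s - k) x)
        + deltaP r * chebT (s - k) x + deltaM r * chebT k x := by
  obtain ⟨n, rfl⟩ : ∃ n, r = n + 1 := ⟨r - 1, by omega⟩
  exact stmt_10_aux s hs k hk1 hk2 x n
end
end

section
/- Let s ≥ 2 be an integer and let k be an integer with 1 ≤ k ≤ s − 1. (i) For every odd integer r ≥ 3 and all real x, T_{rs+k}(x) = 2 ∑_{j=3, j odd}^{r} ( T_{js}(x)·T_k(x) − T_{(j−1)s}(x)·T_{s−k}(x) ) + 2·T_s(x)·T_k(x) − T_{s−k}(x). (ii) For every even integer r ≥ 2 and all real x, T_{rs+k}(x) = 2 ∑_{j=2, j even}^{r} ( T_{js}(x)·T_k(x) − T_{(j−1)s}(x)·T_{s−k}(x) ) + T_k(x). -/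
open scoped Classical

noncomputable section

open Polynomial.Chebyshev in
def evT' (x : ℝ) (n : ℤ) : ℝ := (T ℝ n).eval x

lemma cheb_eval' (x : ℝ) : ∀ n : ℕ, chebT n x = evT' x n
  | 0 => by simp [chebT, evT']
  | 1 => by simp [chebT, evT']
  | n + 2 => by
      rw [chebT, cheb_eval' x (n+1), cheb_eval' x n]
      unfold evT'
      have := Polynomial.Chebyshev.T_add_two ℝ (n : ℤ)
      push_cast
      rw [this]
      simp

lemma evT_mul' (x : ℝ) (m k : ℤ) : 2 * evT' x m * evT' x k = evT' x (m + k) + evT' x (m - k) := by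
  unfold evT'
  have := congrArg (Polynomial.eval x) (Polynomial.Chebyshev.T_mul_T ℝ m k)
  simpa [Polynomial.eval_mul] using this

lemma E' (x : ℝ) (n : ℕ) (m : ℤ) (h : (n:ℤ) = m) : chebT n x = evT' x m := by
  rw [cheb_eval' x n, h]

lemma cancelZ (x : ℝ) (S K a : ℤ) :
    2 * (evT' x ((a+2)*S) * evT' x K - evT' x ((a+1)*S) * evT' x (S-K))
      = evT' x ((a+2)*S+K) - evT' x (a*S+K) := by
  have e1 := evT_mul' x ((a+2)*S) K
  have e2 := evT_mul' x ((a+1)*S) (S-K)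
  rw [show (a+1)*S + (S-K) = (a+2)*S - K by ring,
      show (a+1)*S - (S-K) = a*S+K by ring] at e2
  linarith

lemma cancelN (s k a : ℕ) (hk : k ≤ s) (x : ℝ) :
    2 * (chebT ((a+2)*s) x * chebT k x - chebT ((a+1)*s) x * chebT (s-k) x)
      = chebT ((a+2)*s+k) x - chebT (a*s+k) x := by
  rw [E' x ((a+2)*s) (((a:ℤ)+2)*s) (by push_cast; ring),
      E' x k k (by simp),
      E' x ((a+1)*s) (((a:ℤ)+1)*s) (by push_cast; ring),
      E' x (s-k) ((s:ℤ)-k) (by push_cast [hk]; ring),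
      E' x ((a+2)*s+k) (((a:ℤ)+2)*s+k) (by push_cast; ring),
      E' x (a*s+k) ((a:ℤ)*s+k) (by push_cast; ring)]
  exact cancelZ x s k a

lemma prod_sk (s k : ℕ) (hk : k ≤ s) (x : ℝ) :
    2 * chebT s x * chebT k x = chebT (s+k) x + chebT (s-k) x := by
  rw [E' x s s (by simp), E' x k k (by simp),
      E' x (s+k) ((s:ℤ)+k) (by push_cast; ring),
      E' x (s-k) ((s:ℤ)-k) (by push_cast [hk]; ring)]
  exact evT_mul' x s k

lemma oddAux (s k : ℕ) (hk : k ≤ s) (x : ℝ) : ∀ m : ℕ,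
    chebT ((2*m+3)*s + k) x =
      2 * ∑ j ∈ (Finset.Icc 3 (2*m+3)).filter (fun j => Odd j),
            (chebT (j*s) x * chebT k x - chebT ((j-1)*s) x * chebT (s-k) x)
        + 2 * chebT s x * chebT k x - chebT (s-k) x
  | 0 => by
      have hset : (Finset.Icc 3 (2*0+3)).filter (fun j => Odd j) = {3} := by
        ext j; simp [Nat.odd_iff, Finset.mem_Icc]; omega
      rw [hset, Finset.sum_singleton]
      have h1 := cancelN s k 1 hk x
      have h2 := prod_sk s k hk x
      norm_num at h1 ⊢
      
      linarith
  | m + 1 => by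
      have ih := oddAux s k hk x m
      have hset : (Finset.Icc 3 (2*(m+1)+3)).filter (fun j => Odd j)
          = insert (2*m+5) ((Finset.Icc 3 (2*m+3)).filter (fun j => Odd j)) := by
        ext j; simp [Nat.odd_iff, Finset.mem_Icc]; omega
      have hnot : (2*m+5) ∉ (Finset.Icc 3 (2*m+3)).filter (fun j => Odd j) := by
        first | (simp [Finset.mem_Icc]; omega) | simp [Finset.mem_Icc]
      rw [hset, Finset.sum_insert hnot]
      have h1 := cancelN s k (2*m+3) hk x
      rw [show (2*m+3+2) = 2*m+5 by omega, show (2*m+3+1) = 2*m+5-1 by omega] at h1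
      rw [show (2*(m+1)+3) = 2*m+5 by ring]
      rw [show (2*m+5)*s+k = (2*m+3)*s+k + 2*s by ring] at h1 ⊢
      linarith

lemma evenAux (s k : ℕ) (hk : k ≤ s) (x : ℝ) : ∀ m : ℕ,
    chebT ((2*m+2)*s + k) x =
      2 * ∑ j ∈ (Finset.Icc 2 (2*m+2)).filter (fun j => Even j),
            (chebT (j*s) x * chebT k x - chebT ((j-1)*s) x * chebT (s-k) x)
        + chebT k x
  | 0 => by
      have hset : (Finset.Icc 2 (2*0+2)).filter (fun j => Even j) = {2} := by
        ext j; simp [Nat.even_iff, Finset.mem_Icc]; omega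
      rw [hset, Finset.sum_singleton]
      have h1 := cancelN s k 0 hk x
      norm_num at h1 ⊢
      linarith
  | m + 1 => by
      have ih := evenAux s k hk x m
      have hset : (Finset.Icc 2 (2*(m+1)+2)).filter (fun j => Even j)
          = insert (2*m+4) ((Finset.Icc 2 (2*m+2)).filter (fun j => Even j)) := by
        ext j; simp [Nat.even_iff, Finset.mem_Icc]; omega
      have hnot : (2*m+4) ∉ (Finset.Icc 2 (2*m+2)).filter (fun j => Even j) := by
        first | (simp [Finset.mem_Icc]; omega) | simp [Finset.mem_Icc]
      rw [hset, Finset.sum_insert hnot]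
      have h1 := cancelN s k (2*m+2) hk x
      rw [show (2*m+2+2) = 2*m+4 by omega, show (2*m+2+1) = 2*m+4-1 by omega] at h1
      rw [show (2*(m+1)+2) = 2*m+4 by ring]
      rw [show (2*m+4)*s+k = (2*m+2)*s+k + 2*s by ring] at h1 ⊢
      linarith


/-- odd/even telescoped expansions of `T_{rs+k}`. -/
theorem stmt_12 (s : ℕ) (hs : 2 ≤ s) (k : ℕ) (hk1 : 1 ≤ k) (hk2 : k ≤ s - 1) :
    (∀ r : ℕ, 3 ≤ r → Odd r → ∀ x : ℝ,
      chebT (r * s + k) x =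
        2 * ∑ j ∈ (Finset.Icc 3 r).filter (fun j => Odd j),
              (chebT (j * s) x * chebT k x - chebT ((j - 1) * s) x * chebT (s - k) x)
          + 2 * chebT s x * chebT k x - chebT (s - k) x) ∧
    (∀ r : ℕ, 2 ≤ r → Even r → ∀ x : ℝ,
      chebT (r * s + k) x =
        2 * ∑ j ∈ (Finset.Icc 2 r).filter (fun j => Even j),
              (chebT (j * s) x * chebT k x - chebT ((j - 1) * s) x * chebT (s - k) x)
          + chebT k x) := by
  have hk : k ≤ s := by omega
  constructor
  · intro r hr hodd x
    obtain ⟨t, ht⟩ := hodd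
    rw [show r = 2*((r-3)/2)+3 by omega]
    exact oddAux s k hk x ((r-3)/2)
  · intro r hr heven x
    obtain ⟨t, ht⟩ := heven
    rw [show r = 2*((r-2)/2)+2 by omega]
    exact evenAux s k hk x ((r-2)/2)
end
end

section
/- Let s ≥ 2 and k ≥ 0 be integers and let b₀, b₁, …, b_{s^{k+1}−1} be real numbers. For l = 0, 1, …, s − 1 define Ã_{l,0} = b_{l·s^k}, and for j = 1, …, s^k − 1 define Ã_{l,j} = (2 − δ_{l0}) · ∑_{r=l}^{s−1} ( δ⁻_{r−l} · b_{r·s^k + j} − δ⁺_{r−l} · b_{(r+1)·s^k − j} ), where δ_{l0} is the Kronecker delta. Then for all real x, ∑_{j=0}^{s^{k+1}−1} b_j T_j(x) = ∑_{l=0}^{s−1} ( ∑_{j=0}^{s^k−1} Ã_{l,j} T_j(x) ) · T_l( T_{s^k}(x) ). -/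
open scoped Classical

noncomputable section

/-- The coefficients `Ã_{l,j}` of Lemma on Chebyshev decomposition. -/
def Atilde (s k : ℕ) (b : ℕ → ℝ) (l j : ℕ) : ℝ :=
  if j = 0 then b (l * s ^ k)
  else (2 - if l = 0 then (1 : ℝ) else 0) *
    ∑ r ∈ Finset.Icc l (s - 1),
      (deltaM (r - l) * b (r * s ^ k + j) - deltaP (r - l) * b ((r + 1) * s ^ k - j))

lemma chebT_eval : ∀ (n : ℕ) (x : ℝ), chebT n x = (Polynomial.Chebyshev.T ℝ n).eval x
  | 0, x => by simp [chebT]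
  | 1, x => by simp [chebT]
  | n+2, x => by
    have h1 := chebT_eval (n+1) x
    have h0 := chebT_eval n x
    have : ((n+2 : ℕ) : ℤ) = (n : ℤ) + 2 := by push_cast; ring
    rw [chebT, this, Polynomial.Chebyshev.T_add_two]
    push_cast at h1
    simp [h1, h0]

lemma mul_chebT (a b : ℕ) (h : b ≤ a) (x : ℝ) :
    2 * chebT a x * chebT b x = chebT (a+b) x + chebT (a-b) x := by
  have := Polynomial.Chebyshev.T_mul_T (R := ℝ) (a : ℤ) (b : ℤ)
  have hc : ((a - b : ℕ) : ℤ) = (a : ℤ) - b := by omega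
  have := congrArg (Polynomial.eval x) this
  simp only [Polynomial.eval_add, Polynomial.eval_mul, Polynomial.eval_ofNat] at this
  rw [chebT_eval, chebT_eval, chebT_eval, chebT_eval]
  push_cast
  rw [hc]
  convert this using 2

lemma chebT_comp (r m : ℕ) (x : ℝ) : chebT (r*m) x = chebT r (chebT m x) := by
  have := Polynomial.Chebyshev.T_mul (R := ℝ) (r : ℤ) (m : ℤ)
  have := congrArg (Polynomial.eval x) this
  rw [Polynomial.eval_comp] at this
  rw [chebT_eval, chebT_eval, chebT_eval, ← this]
  push_cast
  ring_nf

lemma key (m : ℕ) (t : ℕ) (ht0 : 0 < t) (ht : t < m) (x : ℝ) : ∀ r : ℕ,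
    chebT (r*m+t) x = ∑ l ∈ Finset.range (r+1),
      (2 - if l = 0 then (1:ℝ) else 0) *
        (deltaM (r-l) * chebT t x - deltaP (r-l) * chebT (m-t) x) * chebT l (chebT m x)
  | 0 => by
    simp [deltaM, deltaP, chebT]
    ring
  | 1 => by
    have h := mul_chebT m t (le_of_lt ht) x
    have h1 : chebT 1 (chebT m x) = chebT m x := by simp [chebT]
    rw [Finset.sum_range_succ, Finset.sum_range_one]
    simp only [Nat.sub_self, Nat.sub_zero]
    rw [h1]
    have : (1:ℕ)*m+t = m+t := by ring_nf
    rw [this]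
    have hmt : chebT (m+t) x = 2 * chebT m x * chebT t x - chebT (m-t) x := by
      rw [h]; ring_nf
    rw [hmt]
    simp [deltaM, deltaP, chebT]
    ring
  | (r+2) => by
    have ihr := key m t ht0 ht x r
    have hm : 0 < m := lt_trans ht0 ht
    -- analytic recurrence
    have e1 : 2 * chebT ((r+2)*m) x * chebT t x
        = chebT ((r+2)*m + t) x + chebT ((r+1)*m + (m-t)) x := by
      have hle2 : t ≤ (r+2)*m :=
        le_trans (le_of_lt ht) (Nat.le_mul_of_pos_left m (by omega))
      have := mul_chebT ((r+2)*m) t hle2 x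
      have h2 : (r+2)*m - t = (r+1)*m + (m-t) := by
        have h3 : t ≤ m := le_of_lt ht
        have e : (r+2)*m = (r+1)*m + m := by ring
        omega
      rw [h2] at this; exact this
    have e2 : 2 * chebT ((r+1)*m) x * chebT (m-t) x
        = chebT ((r+1)*m + (m-t)) x + chebT (r*m + t) x := by
      have hle : m - t ≤ (r+1)*m :=
        le_trans (Nat.sub_le _ _) (Nat.le_mul_of_pos_left m (by omega))
      have := mul_chebT ((r+1)*m) (m-t) hle x
      have h2 : (r+1)*m - (m-t) = r*m + t := by
        have h3 : t ≤ m := le_of_lt ht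
        have e : (r+1)*m = r*m + m := by ring
        omega
      rw [h2] at this; exact this
    have recur : chebT ((r+2)*m + t) x
        = 2 * chebT t x * chebT (r+2) (chebT m x)
          - 2 * chebT (m-t) x * chebT (r+1) (chebT m x) + chebT (r*m+t) x := by
      rw [← chebT_comp, ← chebT_comp]
      linarith [e1, e2]
    rw [recur, ihr]
    have hcongr : ∀ l ∈ Finset.range (r+1),
        (2 - if l = 0 then (1:ℝ) else 0) *
          (deltaM (r+2-l) * chebT t x - deltaP (r+2-l) * chebT (m-t) x) * chebT l (chebT m x)
        = (2 - if l = 0 then (1:ℝ) else 0) *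
          (deltaM (r-l) * chebT t x - deltaP (r-l) * chebT (m-t) x) * chebT l (chebT m x) := by
      intro l hl
      rw [Finset.mem_range] at hl
      have h2 : r+2-l = (r-l)+2 := by omega
      rw [h2]
      have : deltaM ((r-l)+2) = deltaM (r-l) := by simp [deltaM, pow_add]
      have h4 : deltaP ((r-l)+2) = deltaP (r-l) := by simp [deltaP, pow_add]
      rw [this, h4]
    conv_rhs => rw [Finset.sum_range_succ, Finset.sum_range_succ,
      Finset.sum_congr rfl hcongr]
    have hr1 : r+2-(r+1) = 1 := by omega
    have hr2 : r+2-(r+2) = 0 := by omega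
    rw [hr1, hr2]
    simp [deltaM, deltaP]
    ring

lemma sum_range_mul (f : ℕ → ℝ) (s m : ℕ) :
    ∑ j ∈ Finset.range (s*m), f j = ∑ r ∈ Finset.range s, ∑ t ∈ Finset.range m, f (r*m+t) := by
  induction s with
  | zero => simp
  | succ n ih =>
    have h : (n+1)*m = n*m + m := by ring
    rw [h, Finset.sum_range_add, ih, Finset.sum_range_succ]

lemma swapRL (s : ℕ) (hs : 1 ≤ s) (F : ℕ → ℕ → ℝ) :
    ∑ r ∈ Finset.range s, ∑ l ∈ Finset.range (r+1), F r l
      = ∑ l ∈ Finset.range s, ∑ r ∈ Finset.Icc l (s-1), F r l := by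
  apply Finset.sum_comm'
  intro r l
  simp only [Finset.mem_range, Finset.mem_Icc]
  omega

lemma reflect (m : ℕ) (f : ℕ → ℕ → ℝ) :
    ∑ t ∈ Finset.Ico 1 m, f t (m-t) = ∑ j ∈ Finset.Ico 1 m, f (m-j) j := by
  apply Finset.sum_nbij' (i := fun t => m - t) (j := fun t => m - t)
  · intro a ha; rw [Finset.mem_Ico] at *; omega
  · intro a ha; rw [Finset.mem_Ico] at *; omega
  · intro a ha; rw [Finset.mem_Ico] at ha; omega
  · intro a ha; rw [Finset.mem_Ico] at ha; omega
  · intro a ha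
    rw [Finset.mem_Ico] at ha
    have : m - (m - a) = a := by omega
    rw [this]

lemma innerEq (m : ℕ) (bb : ℕ → ℝ) (x v c dm dp : ℝ) (r : ℕ) :
    ∑ t ∈ Finset.Ico 1 m, bb (r*m+t) * (c * (dm * chebT t x - dp * chebT (m-t) x) * v)
    = ∑ j ∈ Finset.Ico 1 m, c * (dm * bb (r*m+j) - dp * bb ((r+1)*m-j)) * chebT j x * v := by
  have L : ∑ t ∈ Finset.Ico 1 m, bb (r*m+t) * (c * (dm * chebT t x - dp * chebT (m-t) x) * v)
      = (∑ t ∈ Finset.Ico 1 m, c * dm * bb (r*m+t) * chebT t x * v)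
        - ∑ t ∈ Finset.Ico 1 m, c * dp * bb (r*m+t) * chebT (m-t) x * v := by
    rw [← Finset.sum_sub_distrib]
    apply Finset.sum_congr rfl
    intro t _
    ring
  have R : ∑ j ∈ Finset.Ico 1 m, c * (dm * bb (r*m+j) - dp * bb ((r+1)*m-j)) * chebT j x * v
      = (∑ j ∈ Finset.Ico 1 m, c * dm * bb (r*m+j) * chebT j x * v)
        - ∑ j ∈ Finset.Ico 1 m, c * dp * bb ((r+1)*m-j) * chebT j x * v := by
    rw [← Finset.sum_sub_distrib]
    apply Finset.sum_congr rfl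
    intro t _
    ring
  rw [L, R]
  congr 1
  rw [reflect m (fun t j => c * dp * bb (r*m+t) * chebT j x * v)]
  apply Finset.sum_congr rfl
  intro j hj
  rw [Finset.mem_Ico] at hj
  have h2 : r*m + (m-j) = (r+1)*m - j := by
    have e : (r+1)*m = r*m + m := by ring
    omega
  rw [h2]

/-- decomposition of a Chebyshev expansion of degree `s^{k+1}-1` in terms of
`T_l(T_{s^k}(x))`, `l = 0, …, s-1`. -/
theorem stmt_13 (s : ℕ) (hs : 2 ≤ s) (k : ℕ) (b : ℕ → ℝ) (x : ℝ) :
    ∑ j ∈ Finset.range (s ^ (k + 1)), b j * chebT j x =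
      ∑ l ∈ Finset.range s,
        (∑ j ∈ Finset.range (s ^ k), Atilde s k b l j * chebT j x)
          * chebT l (chebT (s ^ k) x) := by
  have hm : 0 < s ^ k := pow_pos (by omega) k
  have hpow : s ^ (k+1) = s * s ^ k := by rw [pow_succ]; ring
  rw [hpow, sum_range_mul]
  have hsplit : ∀ (f : ℕ → ℝ), ∑ t ∈ Finset.range (s^k), f t
      = f 0 + ∑ t ∈ Finset.Ico 1 (s^k), f t := fun f => by
    rw [Finset.range_eq_Ico, Finset.sum_eq_sum_Ico_succ_bot hm]
  trans ((∑ r ∈ Finset.range s, b (r * s^k) * chebT r (chebT (s^k) x)) +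
      ∑ l ∈ Finset.range s, ∑ r ∈ Finset.Icc l (s-1), ∑ j ∈ Finset.Ico 1 (s^k),
        (2 - if l = 0 then (1:ℝ) else 0) *
          (deltaM (r-l) * b (r * s^k + j) - deltaP (r-l) * b ((r+1) * s^k - j)) * chebT j x
          * chebT l (chebT (s^k) x))
  · -- LHS = C
    have step1 : ∀ r ∈ Finset.range s,
        ∑ t ∈ Finset.range (s^k), b (r * s^k + t) * chebT (r * s^k + t) x
        = b (r * s^k) * chebT r (chebT (s^k) x)
          + ∑ t ∈ Finset.Ico 1 (s^k), b (r * s^k + t) * chebT (r * s^k + t) x := by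
      intro r _
      rw [hsplit]
      simp only [add_zero]
      rw [chebT_comp]
    rw [Finset.sum_congr rfl step1, Finset.sum_add_distrib]
    congr 1
    have step2 : ∀ r ∈ Finset.range s,
        ∑ t ∈ Finset.Ico 1 (s^k), b (r * s^k + t) * chebT (r * s^k + t) x
        = ∑ l ∈ Finset.range (r+1), ∑ t ∈ Finset.Ico 1 (s^k),
            b (r * s^k + t) * ((2 - if l = 0 then (1:ℝ) else 0) *
              (deltaM (r-l) * chebT t x - deltaP (r-l) * chebT (s^k - t) x)
              * chebT l (chebT (s^k) x)) := by
      intro r _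
      have h1 : ∀ t ∈ Finset.Ico 1 (s^k),
          b (r * s^k + t) * chebT (r * s^k + t) x
          = ∑ l ∈ Finset.range (r+1),
              b (r * s^k + t) * ((2 - if l = 0 then (1:ℝ) else 0) *
                (deltaM (r-l) * chebT t x - deltaP (r-l) * chebT (s^k - t) x)
                * chebT l (chebT (s^k) x)) := by
        intro t ht
        rw [Finset.mem_Ico] at ht
        rw [key (s^k) t (by omega) ht.2 x r, Finset.mul_sum]
      rw [Finset.sum_congr rfl h1]
      exact Finset.sum_comm
    rw [Finset.sum_congr rfl step2, swapRL s (by omega)]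
    apply Finset.sum_congr rfl
    intro l _
    apply Finset.sum_congr rfl
    intro r _
    exact innerEq (s^k) b x (chebT l (chebT (s^k) x)) _ _ _ r
  · -- C = RHS
    symm
    have stepB : ∀ l ∈ Finset.range s,
        (∑ j ∈ Finset.range (s^k), Atilde s k b l j * chebT j x) * chebT l (chebT (s^k) x)
        = b (l * s^k) * chebT l (chebT (s^k) x)
          + ∑ r ∈ Finset.Icc l (s-1), ∑ j ∈ Finset.Ico 1 (s^k),
              (2 - if l = 0 then (1:ℝ) else 0) *
                (deltaM (r-l) * b (r*s^k+j) - deltaP (r-l) * b ((r+1)*s^k-j)) * chebT j x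
                * chebT l (chebT (s^k) x) := by
      intro l _
      rw [hsplit]
      have h0 : Atilde s k b l 0 * chebT 0 x = b (l * s^k) := by
        simp [Atilde, chebT]
      rw [h0, add_mul]
      congr 1
      rw [Finset.sum_mul]
      have h1 : ∀ j ∈ Finset.Ico 1 (s^k),
          Atilde s k b l j * chebT j x * chebT l (chebT (s^k) x)
          = ∑ r ∈ Finset.Icc l (s-1),
              (2 - if l = 0 then (1:ℝ) else 0) *
                (deltaM (r-l) * b (r*s^k+j) - deltaP (r-l) * b ((r+1)*s^k-j)) * chebT j x
                * chebT l (chebT (s^k) x) := by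
        intro j hj
        rw [Finset.mem_Ico] at hj
        rw [Atilde, if_neg (by omega), Finset.mul_sum, Finset.sum_mul, Finset.sum_mul]
      rw [Finset.sum_congr rfl h1]
      exact Finset.sum_comm
    rw [Finset.sum_congr rfl stepB, Finset.sum_add_distrib]
end
end
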